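/- arXiv:2403.12549 — 3 statements merged into one kernel-verified Lean document; each statement's English description precedes it below -/
import Mathlib

section
/- Let n and k be integers with k ≥ 2, n ≥ 2k+1, and 3·C(n−k,k) ≥ 2·C(n,k). Then the treewidth of the bipartite Kneser graph satisfies tw(BK(n,k)) = C(n,k) − 1. -/
/-- A tree decomposition of a graph `G` over a tree `T`: bags cover all vertices and all
edges, and for each vertex the set of nodes whose bags contain it induces a connected
(hence subtree) part of `T`. -/
structure TreeDecomp {V : Type*} {ι : Type} (G : SimpleGraph V) (T : SimpleGraph ι) where
  bag : ι → Finset V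
  cover : ∀ v : V, ∃ i, v ∈ bag i
  edgeCover : ∀ u v : V, G.Adj u v → ∃ i, u ∈ bag i ∧ v ∈ bag i
  subtree : ∀ v : V, (T.induce {i : ι | v ∈ bag i}).Connected

/-- The treewidth of a finite graph: the minimum over all tree decompositions of
(maximum bag size − 1). -/
noncomputable def treewidth {V : Type*} [Fintype V] (G : SimpleGraph V) : ℕ :=
  sInf { w : ℕ | ∃ (ι : Type) (_ : Fintype ι) (T : SimpleGraph ι),
    T.IsTree ∧ ∃ D : TreeDecomp G T,
      (Finset.univ.sup fun i => (D.bag i).card) - 1 = w }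

/-- A path decomposition of `G` with bags indexed by `Fin m` along a path: for each
vertex, the set of indices of bags containing it is an interval. -/
structure PathDecomp {V : Type*} (G : SimpleGraph V) (m : ℕ) where
  bag : Fin m → Finset V
  cover : ∀ v : V, ∃ i, v ∈ bag i
  edgeCover : ∀ u v : V, G.Adj u v → ∃ i, u ∈ bag i ∧ v ∈ bag i
  interval : ∀ (v : V) (i j k : Fin m), i ≤ j → j ≤ k → v ∈ bag i → v ∈ bag k → v ∈ bag j

/-- The pathwidth of a finite graph: the minimum over all path decompositions of
(maximum bag size − 1). -/
noncomputable def pathwidth {V : Type*} [Fintype V] (G : SimpleGraph V) : ℕ :=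
  sInf { w : ℕ | ∃ (m : ℕ) (D : PathDecomp G m),
    (Finset.univ.sup fun i => (D.bag i).card) - 1 = w }

/-- The bandwidth of a finite graph: the minimum over all bijective numberings of the
vertices of the maximum stretch `|φ u − φ v|` over edges `uv`. -/
noncomputable def bandwidth {V : Type*} [Fintype V] (G : SimpleGraph V) : ℕ :=
  sInf { b : ℕ | ∃ φ : V ≃ Fin (Fintype.card V),
    ∀ u v : V, G.Adj u v → ((φ u : ℤ) - (φ v : ℤ)).natAbs ≤ b }

/-- The bipartite Kneser graph `BK(n,k)`: vertices are the `k`-subsets and the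
`(n−k)`-subsets of `{1,…,n}`; a `k`-subset is adjacent to an `(n−k)`-subset containing
it (equivalently, for `2k < n`, two vertices are adjacent iff one is strictly contained
in the other). -/
def bipartiteKneser (n k : ℕ) :
    SimpleGraph {A : Finset (Fin n) // A.card = k ∨ A.card = n - k} where
  Adj A B := A.1 ⊂ B.1 ∨ B.1 ⊂ A.1
  symm := ⟨fun A B h => h.symm⟩
  loopless := ⟨fun A h => by
    rcases h with h | h <;> exact ssubset_irrefl _ h⟩

namespace TD

variable {ι : Type} (T : SimpleGraph ι)

/-- the graph `T` with vertex `t` removed (as an edge-condition) -/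
def K (t : ι) : SimpleGraph ι where
  Adj a b := T.Adj a b ∧ a ≠ t ∧ b ≠ t
  symm := ⟨fun a b h => ⟨h.1.symm, h.2.2, h.2.1⟩⟩
  loopless := ⟨fun a h => T.loopless.irrefl a h.1⟩

variable {T}

lemma kwalk_support_ne {t a b : ι} (w : (K T t).Walk a b) (ha : a ≠ t) :
    ∀ s ∈ w.support, s ≠ t := by
  induction w with
  | nil =>
    intro s hs
    rw [SimpleGraph.Walk.support_nil, List.mem_singleton] at hs
    exact hs ▸ ha
  | @cons u v _ h p ih =>
    intro s hs
    rw [SimpleGraph.Walk.support_cons, List.mem_cons] at hs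
    rcases hs with rfl | hs
    · exact ha
    · exact ih h.2.2 s hs

lemma kreach_ne {t a b : ι} (h : (K T t).Reachable a b) (ha : a ≠ t) : b ≠ t := by
  obtain ⟨w⟩ := h
  exact kwalk_support_ne w ha b w.end_mem_support

/-- a `T`-walk whose support avoids `t` gives reachability in `K T t` -/
lemma reach_of_walk_avoid {t a b : ι} (w : T.Walk a b) (h : ∀ s ∈ w.support, s ≠ t) :
    (K T t).Reachable a b := by
  induction w with
  | nil => exact SimpleGraph.Reachable.refl _
  | @cons u v _ hadj p ih =>
    have hu : u ≠ t := h u (SimpleGraph.Walk.start_mem_support _)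
    have hv : v ≠ t := by
      apply h
      rw [SimpleGraph.Walk.support_cons, List.mem_cons]
      exact Or.inr (SimpleGraph.Walk.start_mem_support _)
    refine (SimpleGraph.Adj.reachable ?_).trans (ih ?_)
    · exact ⟨hadj, hu, hv⟩
    · intro s hs
      apply h
      rw [SimpleGraph.Walk.support_cons, List.mem_cons]
      exact Or.inr hs

/-- conversely, reachability in `K T t` gives a `T`-walk avoiding `t` -/
lemma walk_avoid_of_kreach {t a b : ι} (h : (K T t).Reachable a b) (ha : a ≠ t) :
    ∃ w : T.Walk a b, ∀ s ∈ w.support, s ≠ t := by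
  obtain ⟨w⟩ := h
  induction w with
  | nil =>
    refine ⟨SimpleGraph.Walk.nil, ?_⟩
    intro s hs
    rw [SimpleGraph.Walk.support_nil, List.mem_singleton] at hs
    exact hs ▸ ha
  | @cons u v _ h p ih =>
    obtain ⟨w', hw'⟩ := ih h.2.2
    refine ⟨SimpleGraph.Walk.cons h.1 w', ?_⟩
    intro s hs
    rw [SimpleGraph.Walk.support_cons, List.mem_cons] at hs
    rcases hs with rfl | hs
    · exact h.2.1
    · exact hw' s hs

/-- key contradiction: no vertex can be on both sides of a tree edge -/
lemma core {t t' s : ι} (hT : T.IsTree) (hadj : T.Adj t t') (hst : s ≠ t) (hst' : s ≠ t')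
    (h1 : (K T t).Reachable t' s) (h2 : (K T t').Reachable t s) : False := by
  classical
  obtain ⟨w1, hw1⟩ := walk_avoid_of_kreach h1 (T.ne_of_adj hadj).symm
  obtain ⟨w2, hw2⟩ := walk_avoid_of_kreach h2 (T.ne_of_adj hadj)
  have hp1 : t ∉ w1.bypass.support := fun hc =>
    hw1 t (SimpleGraph.Walk.support_bypass_subset _ hc) rfl
  have hp2 : t' ∉ w2.bypass.support := fun hc =>
    hw2 t' (SimpleGraph.Walk.support_bypass_subset _ hc) rfl
  have hP : (SimpleGraph.Walk.cons hadj w1.bypass).IsPath := by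
    rw [SimpleGraph.Walk.cons_isPath_iff]
    exact ⟨SimpleGraph.Walk.bypass_isPath _, hp1⟩
  have huniq := hT.existsUnique_path t s
  have heq := huniq.unique hP (SimpleGraph.Walk.bypass_isPath w2)
  apply hp2
  rw [← heq]
  rw [SimpleGraph.Walk.support_cons, List.mem_cons]
  exact Or.inr (SimpleGraph.Walk.start_mem_support _)

/-- from any vertex `s₀ ≠ t` there is a neighbour `t'` of `t` with `s₀` on the `t'`-side -/
lemma exists_neighbor {t s₀ : ι} (hT : T.IsTree) (hs₀ : s₀ ≠ t) :
    ∃ t', T.Adj t t' ∧ (K T t).Reachable t' s₀ := by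
  classical
  obtain ⟨w⟩ := hT.isConnected.preconnected t s₀
  have hp := w.bypass_isPath
  generalize hq : w.bypass = p at hp
  clear hq
  cases p with
  | nil => exact absurd rfl hs₀.symm
  | @cons _ t' _ hadj q =>
    rw [SimpleGraph.Walk.cons_isPath_iff] at hp
    refine ⟨t', hadj, reach_of_walk_avoid q ?_⟩
    intro s hs hst
    exact hp.2 (hst ▸ hs)

/-- a walk in `K T x` avoiding `y` gives reachability in `K T y` -/
lemma ktrans {x y : ι} : ∀ {a b : ι} (w : (K T x).Walk a b),
    (∀ s ∈ w.support, s ≠ y) → (K T y).Reachable a b := by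
  intro a b w
  induction w with
  | nil => exact fun _ => SimpleGraph.Reachable.refl _
  | @cons u v _ h p ih =>
    intro hsup
    have hu : u ≠ y := hsup u (SimpleGraph.Walk.start_mem_support _)
    have hv : v ≠ y := by
      apply hsup
      rw [SimpleGraph.Walk.support_cons, List.mem_cons]
      exact Or.inr (SimpleGraph.Walk.start_mem_support _)
    refine (SimpleGraph.Adj.reachable (show (K T y).Adj u v from ⟨h.1, hu, hv⟩)).trans (ih ?_)
    intro s hs
    apply hsup
    rw [SimpleGraph.Walk.support_cons, List.mem_cons]
    exact Or.inr hs

/-- the star graph on `Option α` with centre `none` -/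
def star (α : Type) : SimpleGraph (Option α) where
  Adj a b := (a = none ∧ b ≠ none) ∨ (b = none ∧ a ≠ none)
  symm := ⟨fun a b h => h.symm⟩
  loopless := ⟨fun a h => by rcases h with h | h <;> exact h.2 h.1⟩

lemma star_isTree (α : Type) : (star α).IsTree := by
  constructor
  · constructor
    intro a b
    have key : ∀ c : Option α, (star α).Reachable none c := by
      intro c
      cases c with
      | none => exact SimpleGraph.Reachable.refl _
      | some x => exact SimpleGraph.Adj.reachable (Or.inl ⟨rfl, by simp⟩)
    exact (key a).symm.trans (key b)
  · rw [SimpleGraph.isAcyclic_iff_forall_adj_isBridge]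
    intro a b hab
    rw [SimpleGraph.isBridge_iff]
    -- deleting the edge disconnects a from b
    rintro ⟨w⟩
    -- the `some` endpoint has no other edge
    have key : ∀ (x : α) (c : Option α)
        (w : ((star α) \ SimpleGraph.fromEdgeSet {s(some x, none)}).Walk (some x) c),
        c = some x := by
      intro x c w
      cases w with
      | nil => rfl
      | cons h p =>
        exfalso
        rename_i v
        have hv : v = none := by
          rcases h.1 with h1 | h1
          · exact absurd h1.1 (by simp)
          · exact h1.1
        apply h.2
        rw [hv]
        simp [SimpleGraph.fromEdgeSet_adj]
    rcases hab with hab | hab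
    · -- a = none, b = some
      obtain ⟨x, hx⟩ := Option.ne_none_iff_exists'.1 hab.2
      subst hx
      rw [hab.1] at w
      have := key x none ?_
      · simp at this
      · have hcomm : s(some x, (none : Option α)) = s((none : Option α), some x) :=
          Sym2.eq_swap
        rw [← hcomm] at w
        exact w.reverse
    · obtain ⟨x, hx⟩ := Option.ne_none_iff_exists'.1 hab.2
      subst hx
      rw [hab.1] at w
      have := key x none w
      simp at this

end TD


namespace FT
open Finset

/-- replace `j` by `i` if possible -/
def cp (i j : ℕ) (A : Finset ℕ) : Finset ℕ :=
  if j ∈ A ∧ i ∉ A then insert i (A.erase j) else A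

/-- family compression -/
def CP (i j : ℕ) (F : Finset (Finset ℕ)) : Finset (Finset ℕ) :=
  (F.filter fun A => cp i j A ∈ F) ∪ ((F.filter fun A => cp i j A ∉ F).image (cp i j))

variable {i j : ℕ} {A B : Finset ℕ} {F G : Finset (Finset ℕ)}

lemma cp_eq_of_not (h : ¬ (j ∈ A ∧ i ∉ A)) : cp i j A = A := if_neg h

lemma cp_eq_of_mem (hj : j ∈ A) (hi : i ∉ A) : cp i j A = insert i (A.erase j) :=
  if_pos ⟨hj, hi⟩

lemma cp_card (hij : i ≠ j) : (cp i j A).card = A.card := by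
  unfold cp
  split_ifs with h
  · rw [card_insert_of_notMem, card_erase_of_mem h.1]
    · have : 1 ≤ A.card := card_pos.2 ⟨j, h.1⟩
      omega
    · simp only [mem_erase]
      tauto
  · rfl

lemma cp_subset_range {ν : ℕ} (hi : i < ν) (hA : A ⊆ range ν) : cp i j A ⊆ range ν := by
  unfold cp
  split_ifs with h
  · intro x hx
    rcases mem_insert.1 hx with rfl | hx
    · exact mem_range.2 hi
    · exact hA (erase_subset _ _ hx)
  · exact hA

lemma mem_cp_self (hij : i ≠ j) : j ∉ cp i j A ∨ (j ∈ A ∧ i ∈ A) := by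
  unfold cp
  split_ifs with h
  · left; simp [mem_insert, mem_erase, hij.symm]
  · by_cases hj : j ∈ A
    · right; exact ⟨hj, by tauto⟩
    · left; exact hj

lemma mem_CP : B ∈ CP i j F ↔ (B ∈ F ∧ cp i j B ∈ F) ∨ (∃ A ∈ F, cp i j A ∉ F ∧ B = cp i j A) := by
  unfold CP
  simp only [mem_union, mem_filter, mem_image]
  constructor
  · rintro (h | ⟨A, ⟨hA, hA2⟩, rfl⟩)
    · exact Or.inl h
    · exact Or.inr ⟨A, hA, hA2, rfl⟩
  · rintro (h | ⟨A, hA, hA2, rfl⟩)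
    · exact Or.inl h
    · exact Or.inr ⟨A, ⟨hA, hA2⟩, rfl⟩

lemma mem_CP_of_mem (hcomp : CP i j F = F) (hA : A ∈ F) : cp i j A ∈ F := by
  by_cases h : cp i j A ∈ F
  · exact h
  · have : cp i j A ∈ CP i j F := by
      rw [mem_CP]
      exact Or.inr ⟨A, hA, h, rfl⟩
    rwa [hcomp] at this

lemma cp_injOn_moved (hij : i ≠ j) (h1 : j ∈ A ∧ i ∉ A) (h2 : j ∈ B ∧ i ∉ B)
    (h : cp i j A = cp i j B) : A = B := by
  rw [cp_eq_of_mem h1.1 h1.2, cp_eq_of_mem h2.1 h2.2] at h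
  have hA : A = insert j (erase (insert i (A.erase j)) i) := by
    rw [erase_insert (by simp [mem_erase]; tauto), insert_erase h1.1]
  have hB : B = insert j (erase (insert i (B.erase j)) i) := by
    rw [erase_insert (by simp [mem_erase]; tauto), insert_erase h2.1]
  rw [hA, hB, h]

lemma card_CP : (CP i j F).card = F.card := by
  unfold CP
  rw [card_union_of_disjoint, card_image_of_injOn]
  · rw [card_filter_add_card_filter_not]
  · intro A hA B hB h
    simp only [coe_filter, Set.mem_setOf_eq] at hA hB
    have hA' : j ∈ A ∧ i ∉ A := by
      by_contra hc
      rw [cp_eq_of_not hc] at hA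
      exact hA.2 hA.1
    have hB' : j ∈ B ∧ i ∉ B := by
      by_contra hc
      rw [cp_eq_of_not hc] at hB
      exact hB.2 hB.1
    exact cp_injOn_moved (by rintro rfl; exact hA'.2 hA'.1) hA' hB' h
  · rw [disjoint_right]
    rintro B hB hB2
    simp only [mem_image, mem_filter] at hB
    obtain ⟨A, ⟨_, hA2⟩, rfl⟩ := hB
    exact hA2 (mem_filter.1 hB2).1


/-- cross-intersecting families -/
def XInt (F G : Finset (Finset ℕ)) : Prop := ∀ A ∈ F, ∀ B ∈ G, (A ∩ B).Nonempty

lemma xint_cp (hij : i ≠ j) (hX : XInt F G) : XInt (CP i j F) (CP i j G) := by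
  have key : ∀ F G : Finset (Finset ℕ), XInt F G →
      ∀ A' B, A' ∈ CP i j F → (A' ∈ F ∧ cp i j A' ∈ F) → B ∈ G → j ∈ B → i ∉ B →
      (A' ∩ insert i (B.erase j)).Nonempty := by
    intro F G hX A' B _ hA' hB hjB hiB
    obtain ⟨x, hx⟩ := hX A' hA'.1 B hB
    rw [mem_inter] at hx
    by_cases hxj : x = j
    · have hjA : j ∈ A' := hxj ▸ hx.1
      by_cases hiA : i ∈ A'
      · exact ⟨i, mem_inter.2 ⟨hiA, mem_insert_self _ _⟩⟩
      · -- A' contains j, not i; use cp A' ∈ F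
        have hcpA : cp i j A' = insert i (A'.erase j) := cp_eq_of_mem hjA hiA
        obtain ⟨y, hy⟩ := hX _ (hcpA ▸ hA'.2) B hB
        rw [mem_inter] at hy
        rcases mem_insert.1 hy.1 with rfl | hy1
        · exact absurd hy.2 hiB
        · refine ⟨y, mem_inter.2 ⟨(mem_erase.1 hy1).2, mem_insert_of_mem ?_⟩⟩
          exact mem_erase.2 ⟨(mem_erase.1 hy1).1, hy.2⟩
    · exact ⟨x, mem_inter.2 ⟨hx.1, mem_insert_of_mem (mem_erase.2 ⟨hxj, hx.2⟩)⟩⟩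
  intro A' hA' B' hB'
  rcases mem_CP.1 hA' with hA | ⟨A, hA, hcpA, rfl⟩ <;>
    rcases mem_CP.1 hB' with hB | ⟨B, hB, hcpB, rfl⟩
  · exact hX A' hA.1 B' hB.1
  · -- A' kept, B' moved
    have hBm : j ∈ B ∧ i ∉ B := by
      by_contra hc; rw [cp_eq_of_not hc] at hcpB; exact hcpB hB
    rw [cp_eq_of_mem hBm.1 hBm.2]
    exact key F G hX A' B hA' hA hB hBm.1 hBm.2
  · -- A' moved, B' kept
    have hAm : j ∈ A ∧ i ∉ A := by
      by_contra hc; rw [cp_eq_of_not hc] at hcpA; exact hcpA hA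
    rw [cp_eq_of_mem hAm.1 hAm.2]
    have hX' : XInt G F := fun B hB A hA => by
      rw [inter_comm]; exact hX A hA B hB
    obtain ⟨x, hx⟩ := key G F hX' B' A hB' hB hA hAm.1 hAm.2
    exact ⟨x, by rw [mem_inter] at hx ⊢; exact ⟨hx.2, hx.1⟩⟩
  · -- both moved
    have hAm : j ∈ A ∧ i ∉ A := by
      by_contra hc; rw [cp_eq_of_not hc] at hcpA; exact hcpA hA
    have hBm : j ∈ B ∧ i ∉ B := by
      by_contra hc; rw [cp_eq_of_not hc] at hcpB; exact hcpB hB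
    rw [cp_eq_of_mem hAm.1 hAm.2, cp_eq_of_mem hBm.1 hBm.2]
    exact ⟨i, mem_inter.2 ⟨mem_insert_self _ _, mem_insert_self _ _⟩⟩

/-- measure for termination -/
def msr (F : Finset (Finset ℕ)) : ℕ := ∑ A ∈ F, ∑ x ∈ A, x

lemma msr_CP_le (hij : i < j) : msr (CP i j F) ≤ msr F ∧ (CP i j F ≠ F → msr (CP i j F) < msr F) := by
  classical
  unfold CP msr
  set K := F.filter fun A => cp i j A ∈ F with hK
  set M := F.filter fun A => cp i j A ∉ F with hM
  have hdisj : Disjoint K (M.image (cp i j)) := by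
    rw [disjoint_right]
    rintro B hB hB2
    simp only [hM, mem_image, mem_filter] at hB
    obtain ⟨A, ⟨_, hA2⟩, rfl⟩ := hB
    exact hA2 (mem_filter.1 hB2).1
  have hinj : Set.InjOn (cp i j) M := by
    intro A hA B hB h
    simp only [hM, coe_filter, Set.mem_setOf_eq] at hA hB
    have hA' : j ∈ A ∧ i ∉ A := by
      by_contra hc; rw [cp_eq_of_not hc] at hA; exact hA.2 hA.1
    have hB' : j ∈ B ∧ i ∉ B := by
      by_contra hc; rw [cp_eq_of_not hc] at hB; exact hB.2 hB.1
    exact cp_injOn_moved (by omega) hA' hB' h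
  rw [sum_union hdisj, sum_image hinj]
  have hsum : ∀ A ∈ M, ∑ x ∈ cp i j A, x + j = (∑ x ∈ A, x) + i := by
    intro A hA
    simp only [hM, mem_filter] at hA
    have hA' : j ∈ A ∧ i ∉ A := by
      by_contra hc; rw [cp_eq_of_not hc] at hA; exact hA.2 hA.1
    rw [cp_eq_of_mem hA'.1 hA'.2, sum_insert (by simp [mem_erase]; tauto),
      ← add_sum_erase A (fun x => x) hA'.1]
    omega
  have hmain : ∀ A ∈ M, ∑ x ∈ cp i j A, x < ∑ x ∈ A, x := by
    intro A hA; have := hsum A hA; omega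
  have hsplit : ∑ A ∈ K, ∑ x ∈ A, x + ∑ A ∈ M, ∑ x ∈ A, x = ∑ A ∈ F, ∑ x ∈ A, x := by
    rw [hK, hM, sum_filter_add_sum_filter_not]
  constructor
  · have : ∑ A ∈ M, ∑ x ∈ cp i j A, x ≤ ∑ A ∈ M, ∑ x ∈ A, x :=
      sum_le_sum fun A hA => (hmain A hA).le
    omega
  · intro hne
    have hMne : M.Nonempty := by
      by_contra hc
      rw [not_nonempty_iff_eq_empty] at hc
      apply hne
      rw [hc, image_empty, union_empty, hK, filter_eq_self]
      intro A hA
      by_contra hc2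
      have : A ∈ M := by rw [hM, mem_filter]; exact ⟨hA, hc2⟩
      rw [hc] at this; exact notMem_empty _ this
    have : ∑ A ∈ M, ∑ x ∈ cp i j A, x < ∑ A ∈ M, ∑ x ∈ A, x :=
      sum_lt_sum_of_nonempty hMne hmain
    omega


lemma CP_props {ν k : ℕ} (hij : i < j) (hF : ∀ A ∈ F, A ⊆ range ν ∧ A.card = k) :
    ∀ A ∈ CP i j F, A ⊆ range ν ∧ A.card = k := by
  intro A' hA'
  rcases mem_CP.1 hA' with hA | ⟨A, hA, _, rfl⟩
  · exact hF _ hA.1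
  · by_cases hm : j ∈ A ∧ i ∉ A
    · obtain ⟨hsub, hcard⟩ := hF A hA
      have hjν : j < ν := mem_range.1 (hsub hm.1)
      exact ⟨cp_subset_range (lt_trans hij hjν) hsub, by rw [cp_card (Nat.ne_of_lt hij)]; exact hcard⟩
    · rw [cp_eq_of_not hm]; exact hF A hA

/-- fully compressed family -/
def Comp (F : Finset (Finset ℕ)) : Prop := ∀ i j : ℕ, i < j → CP i j F = F

lemma exists_comp {ν k : ℕ} (μ : ℕ) : ∀ (F G : Finset (Finset ℕ)), msr F + msr G ≤ μ →
    (∀ A ∈ F, A ⊆ range ν ∧ A.card = k) → (∀ B ∈ G, B ⊆ range ν ∧ B.card = k) → XInt F G →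
    ∃ F' G', (∀ A ∈ F', A ⊆ range ν ∧ A.card = k) ∧ (∀ B ∈ G', B ⊆ range ν ∧ B.card = k) ∧
      XInt F' G' ∧ F'.card = F.card ∧ G'.card = G.card ∧ Comp F' ∧ Comp G' := by
  induction μ using Nat.strong_induction_on with
  | _ μ ih =>
    intro F G hμ hF hG hX
    by_cases hc : ∃ i j : ℕ, i < j ∧ (CP i j F ≠ F ∨ CP i j G ≠ G)
    · obtain ⟨i, j, hij, hor⟩ := hc
      have h1 := msr_CP_le (F := F) hij
      have h2 := msr_CP_le (F := G) hij
      have hlt : msr (CP i j F) + msr (CP i j G) < μ := by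
        rcases hor with h | h
        · have := h1.2 h; omega
        · have := h2.2 h; omega
      obtain ⟨F', G', p1, p2, p3, p4, p5, p6, p7⟩ :=
        ih _ hlt (CP i j F) (CP i j G) le_rfl (CP_props hij hF) (CP_props hij hG)
          (xint_cp (Nat.ne_of_lt hij) hX)
      exact ⟨F', G', p1, p2, p3, by rw [p4, card_CP], by rw [p5, card_CP], p6, p7⟩
    · push_neg at hc
      exact ⟨F, G, hF, hG, hX, rfl, rfl, fun i j hij => (hc i j hij).1,
        fun i j hij => (hc i j hij).2⟩

/-- trivial bound: a family of `jj`-sets all meeting a fixed `a`-set -/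
lemma card_le_of_meets {μ a jj : ℕ} {H : Finset (Finset ℕ)} {A : Finset ℕ}
    (hA : A ⊆ range μ) (hAa : A.card = a)
    (hH : ∀ B ∈ H, B ⊆ range μ ∧ B.card = jj) (hmeet : ∀ B ∈ H, (B ∩ A).Nonempty) :
    H.card ≤ Nat.choose μ jj - Nat.choose (μ - a) jj := by
  have hsub : H ⊆ powersetCard jj (range μ) \ powersetCard jj (range μ \ A) := by
    intro B hB
    rw [mem_sdiff, mem_powersetCard, mem_powersetCard]
    obtain ⟨h1, h2⟩ := hH B hB
    refine ⟨⟨h1, h2⟩, fun hcon => ?_⟩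
    obtain ⟨x, hx⟩ := hmeet B hB
    rw [mem_inter] at hx
    have := hcon.1 hx.1
    rw [mem_sdiff] at this
    exact this.2 hx.2
  calc H.card ≤ _ := card_le_card hsub
    _ = Nat.choose μ jj - Nat.choose (μ - a) jj := by
        rw [card_sdiff_of_subset (powersetCard_mono sdiff_subset), card_powersetCard, card_powersetCard,
          card_range, card_sdiff_of_subset hA, card_range, hAa]

/-- base case: ground set of size 2k, complement pairing -/
lemma base_2k {k : ℕ} {F G : Finset (Finset ℕ)}
    (hF : ∀ A ∈ F, A ⊆ range (2 * k) ∧ A.card = k)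
    (hG : ∀ B ∈ G, B ⊆ range (2 * k) ∧ B.card = k) (hX : XInt F G) :
    F.card + G.card ≤ Nat.choose (2 * k) k := by
  classical
  set G' := G.image (fun B => range (2 * k) \ B) with hG'
  have hcard : G'.card = G.card := by
    rw [hG']
    apply card_image_of_injOn
    intro B1 h1 B2 h2 he
    have e1 : range (2 * k) \ (range (2 * k) \ B1) = B1 := by
      rw [sdiff_sdiff_right_self, inf_eq_inter, inter_eq_right]
      exact (hG B1 h1).1
    have e2 : range (2 * k) \ (range (2 * k) \ B2) = B2 := by
      rw [sdiff_sdiff_right_self, inf_eq_inter, inter_eq_right]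
      exact (hG B2 h2).1
    simp only [] at he
    rw [← e1, ← e2, he]
  have hdisj : Disjoint F G' := by
    rw [disjoint_right]
    intro A hA' hA
    rw [hG', mem_image] at hA'
    obtain ⟨B, hB, rfl⟩ := hA'
    obtain ⟨x, hx⟩ := hX _ hA B hB
    rw [mem_inter, mem_sdiff] at hx
    exact hx.1.2 hx.2
  have hsub : F ∪ G' ⊆ powersetCard k (range (2 * k)) := by
    intro A hA
    rw [mem_powersetCard]
    rcases mem_union.1 hA with h | h
    · exact ⟨(hF A h).1, (hF A h).2⟩
    · rw [hG', mem_image] at h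
      obtain ⟨B, hB, rfl⟩ := h
      refine ⟨sdiff_subset, ?_⟩
      rw [card_sdiff_of_subset (hG B hB).1, card_range, (hG B hB).2]
      omega
  calc F.card + G.card = (F ∪ G').card := by rw [card_union_of_disjoint hdisj, hcard]
    _ ≤ _ := card_le_card hsub
    _ = Nat.choose (2 * k) k := by rw [card_powersetCard, card_range]


lemma comp_erase_mem {m x : ℕ} (hcomp : Comp F) (hA : A ∈ F) (hmA : m ∈ A) (hxm : x < m)
    (hxA : x ∉ A) : insert x (A.erase m) ∈ F := by
  have := mem_CP_of_mem (hcomp x m hxm) hA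
  rwa [cp_eq_of_mem hmA hxA] at this

theorem ft_main (ν : ℕ) : ∀ (k : ℕ) (F G : Finset (Finset ℕ)), 1 ≤ k → 2 * k ≤ ν →
    (∀ A ∈ F, A ⊆ range ν ∧ A.card = k) → (∀ B ∈ G, B ⊆ range ν ∧ B.card = k) →
    XInt F G → F.Nonempty → G.Nonempty →
    F.card + G.card ≤ Nat.choose ν k - Nat.choose (ν - k) k + 1 := by
  induction ν using Nat.strong_induction_on with
  | _ ν ih =>
    intro k F₀ G₀ hk hν hF₀ hG₀ hX₀ hF₀ne hG₀ne
    -- pass to compressed families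
    obtain ⟨F, G, hF, hG, hX, hcF, hcG, hcompF, hcompG⟩ :=
      exists_comp (msr F₀ + msr G₀) F₀ G₀ le_rfl hF₀ hG₀ hX₀
    rw [← hcF, ← hcG]
    have hFne : F.Nonempty := by rw [← card_pos, hcF, card_pos]; exact hF₀ne
    have hGne : G.Nonempty := by rw [← card_pos, hcG, card_pos]; exact hG₀ne
    clear hcF hcG hF₀ hG₀ hX₀ hF₀ne hG₀ne
    -- case k = 1
    by_cases hk1 : k = 1
    · subst hk1
      obtain ⟨A₀, hA₀⟩ := hFne
      obtain ⟨B₀, hB₀⟩ := hGne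
      have key : ∀ A ∈ F, ∀ B ∈ G, A = B := by
        intro A hA B hB
        obtain ⟨x, hx⟩ := hX A hA B hB
        rw [mem_inter] at hx
        obtain ⟨a, ha⟩ := card_eq_one.1 (hF A hA).2
        obtain ⟨b, hb⟩ := card_eq_one.1 (hG B hB).2
        rw [ha, hb]; rw [ha, hb] at hx
        simp only [mem_singleton] at hx
        rw [← hx.1, ← hx.2]
      have hFc : F.card ≤ 1 := by
        apply card_le_one.2
        intro A hA B hB
        rw [key A hA B₀ hB₀, key B hB B₀ hB₀]
      have hGc : G.card ≤ 1 := by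
        apply card_le_one.2
        intro A hA B hB
        rw [← key A₀ hA₀ A hA, ← key A₀ hA₀ B hB]
      have h1 : Nat.choose ν 1 = ν := Nat.choose_one_right ν
      have h2 : Nat.choose (ν - 1) 1 = ν - 1 := Nat.choose_one_right _
      omega
    have hk2 : 2 ≤ k := by omega
    -- case ν = 2k
    by_cases hν2k : ν = 2 * k
    · subst hν2k
      have := base_2k hF hG hX
      have h3 : 1 ≤ Nat.choose (2 * k) k := Nat.choose_pos (by omega)
      rw [show 2 * k - k = k by omega, Nat.choose_self]
      omega
    have hν' : 2 * k + 1 ≤ ν := by omega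
    set m := ν - 1 with hm
    have hmν : ν = m + 1 := by omega
    -- split families by the top element m
    set F0 := F.filter (fun A => m ∉ A) with hF0
    set F1 := (F.filter (fun A => m ∈ A)).image (fun A => A.erase m) with hF1
    set G0 := G.filter (fun B => m ∉ B) with hG0
    set G1 := (G.filter (fun B => m ∈ B)).image (fun B => B.erase m) with hG1
    have erase_inj : ∀ (H : Finset (Finset ℕ)),
        ((H.filter (fun A => m ∈ A)).image (fun A => A.erase m)).card
          = (H.filter (fun A => m ∈ A)).card := by
      intro H
      apply card_image_of_injOn
      intro A h1 B h2 he
      simp only [coe_filter, Set.mem_setOf_eq] at h1 h2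
      simp only [] at he
      rw [← insert_erase h1.2, ← insert_erase h2.2, he]
    have cardF : F.card = F0.card + F1.card := by
      rw [hF0, hF1, erase_inj F]
      have := card_filter_add_card_filter_not (s := F) (p := fun A => m ∈ A)
      omega
    have cardG : G.card = G0.card + G1.card := by
      rw [hG0, hG1, erase_inj G]
      have := card_filter_add_card_filter_not (s := G) (p := fun B => m ∈ B)
      omega
    -- properties of split families
    have hmk : 2 * k ≤ m := by omega
    have props0 : ∀ (H : Finset (Finset ℕ)), (∀ A ∈ H, A ⊆ range ν ∧ A.card = k) →
        ∀ A ∈ H.filter (fun A => m ∉ A), A ⊆ range m ∧ A.card = k := by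
      intro H hH A hA
      rw [mem_filter] at hA
      obtain ⟨h1, h2⟩ := hH A hA.1
      refine ⟨fun x hx => ?_, h2⟩
      have hx1 := mem_range.1 (h1 hx)
      have hx2 : x ≠ m := fun e => hA.2 (e ▸ hx)
      rw [mem_range]; omega
    have props1 : ∀ (H : Finset (Finset ℕ)), (∀ A ∈ H, A ⊆ range ν ∧ A.card = k) →
        ∀ A ∈ (H.filter (fun A => m ∈ A)).image (fun A => A.erase m),
          A ⊆ range m ∧ A.card = k - 1 := by
      intro H hH A' hA'
      rw [mem_image] at hA'
      obtain ⟨A, hA, rfl⟩ := hA'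
      rw [mem_filter] at hA
      obtain ⟨h1, h2⟩ := hH A hA.1
      constructor
      · intro x hx
        rw [mem_erase] at hx
        have := mem_range.1 (h1 hx.2)
        rw [mem_range]; omega
      · rw [card_erase_of_mem hA.2, h2]
    have ne0 : ∀ (H : Finset (Finset ℕ)), (∀ A ∈ H, A ⊆ range ν ∧ A.card = k) → Comp H →
        H.Nonempty → (H.filter (fun A => m ∉ A)).Nonempty := by
      rintro H hH hcomp ⟨A, hA⟩
      by_cases hmA : m ∈ A
      · have hx : (range m \ A).Nonempty := by
          rw [← card_pos]
          have h1 := le_card_sdiff A (range m)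
          rw [card_range] at h1
          have h2 := (hH A hA).2
          omega
        obtain ⟨x, hx⟩ := hx
        rw [mem_sdiff, mem_range] at hx
        have hmem := comp_erase_mem hcomp hA hmA hx.1 hx.2
        refine ⟨insert x (A.erase m), mem_filter.2 ⟨hmem, ?_⟩⟩
        rw [mem_insert]
        push_neg
        exact ⟨by omega, notMem_erase _ _⟩
      · exact ⟨A, mem_filter.2 ⟨hA, hmA⟩⟩
    -- key: F1 and G1 are cross-intersecting (uses compression)
    have hXF1G1 : XInt F1 G1 := by
      intro A' hA' B' hB'
      rw [hF1, mem_image] at hA'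
      obtain ⟨A, hAf, rfl⟩ := hA'
      rw [mem_filter] at hAf
      rw [hG1, mem_image] at hB'
      obtain ⟨B, hBf, rfl⟩ := hB'
      rw [mem_filter] at hBf
      by_contra hcon
      rw [not_nonempty_iff_eq_empty] at hcon
      have hcards : (A.erase m ∪ B.erase m).card ≤ 2 * k - 2 := by
        have h1 : (A.erase m).card = k - 1 := by
          rw [card_erase_of_mem hAf.2, (hF A hAf.1).2]
        have h2 : (B.erase m).card = k - 1 := by
          rw [card_erase_of_mem hBf.2, (hG B hBf.1).2]
        have := card_union_le (A.erase m) (B.erase m)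
        omega
      have hxex : (range m \ (A.erase m ∪ B.erase m)).Nonempty := by
        rw [← card_pos]
        have h1 := le_card_sdiff (A.erase m ∪ B.erase m) (range m)
        rw [card_range] at h1
        omega
      obtain ⟨x, hx⟩ := hxex
      rw [mem_sdiff, mem_union, mem_range] at hx
      push_neg at hx
      have hxB : x ∉ B := by
        intro hxB
        exact hx.2.2 (mem_erase.2 ⟨by omega, hxB⟩)
      have hBx : insert x (B.erase m) ∈ G := comp_erase_mem hcompG hBf.1 hBf.2 hx.1 hxB
      obtain ⟨y, hy⟩ := hX A hAf.1 _ hBx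
      rw [mem_inter, mem_insert] at hy
      rcases hy.2 with rfl | hy2
      · exact hx.2.1 (mem_erase.2 ⟨by omega, hy.1⟩)
      · have hym : y ≠ m := (mem_erase.1 hy2).1
        have : y ∈ A.erase m ∩ B.erase m := mem_inter.2 ⟨mem_erase.2 ⟨hym, hy.1⟩, hy2⟩
        rw [hcon] at this
        exact notMem_empty _ this
    -- Pascal facts
    have p1 : Nat.choose (m + 1) k = Nat.choose m (k - 1) + Nat.choose m k := by
      have := Nat.choose_succ_succ' m (k - 1)
      rw [show k - 1 + 1 = k by omega] at this
      exact this
    have p2 : Nat.choose (m + 1 - k) k = Nat.choose (m - k) (k - 1) + Nat.choose (m - k) k := by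
      have := Nat.choose_succ_succ' (m - k) (k - 1)
      rw [show k - 1 + 1 = k by omega] at this
      rw [show m + 1 - k = m - k + 1 by omega]
      exact this
    have q1 : Nat.choose (m - k) k ≤ Nat.choose m k := Nat.choose_le_choose k (by omega)
    have q2 : Nat.choose (m - k) (k - 1) ≤ Nat.choose m (k - 1) :=
      Nat.choose_le_choose (k - 1) (by omega)
    rw [hmν]
    -- case analysis on emptiness of F1, G1
    by_cases hF1e : F1 = ∅
    · have hFF0 : F = F0 := by
        rw [hF0, eq_comm, filter_eq_self]
        intro A hA hmA
        have : A.erase m ∈ F1 := by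
          rw [hF1, mem_image]
          exact ⟨A, mem_filter.2 ⟨hA, hmA⟩, rfl⟩
        rw [hF1e] at this
        exact notMem_empty _ this
      have propsFm : ∀ A ∈ F, A ⊆ range m ∧ A.card = k := by
        rw [hFF0]; exact props0 F hF
      by_cases hG1e : G1 = ∅
      · have hGG0 : G = G0 := by
          rw [hG0, eq_comm, filter_eq_self]
          intro B hB hmB
          have : B.erase m ∈ G1 := by
            rw [hG1, mem_image]
            exact ⟨B, mem_filter.2 ⟨hB, hmB⟩, rfl⟩
          rw [hG1e] at this
          exact notMem_empty _ this
        have propsGm : ∀ B ∈ G, B ⊆ range m ∧ B.card = k := by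
          rw [hGG0]; exact props0 G hG
        have hb := ih m (by omega) k F G hk hmk propsFm propsGm hX hFne hGne
        omega
      · -- F1 empty, G1 nonempty
        have hG1ne : G1.Nonempty := nonempty_iff_ne_empty.2 hG1e
        have hG0ne : G0.Nonempty := ne0 G hG hcompG hGne
        have hXFG0 : XInt F G0 := fun A hA B hB => hX A hA B (mem_filter.1 hB).1
        have hb1 := ih m (by omega) k F G0 hk hmk propsFm (props0 G hG) hXFG0 hFne hG0ne
        obtain ⟨A₀, hA₀⟩ := hFne
        have hA₀p := propsFm A₀ hA₀
        have hmA₀ : m ∉ A₀ := fun hc => by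
          have := mem_range.1 (hA₀p.1 hc); omega
        have hmeet : ∀ B' ∈ G1, (B' ∩ A₀).Nonempty := by
          intro B' hB'
          rw [hG1, mem_image] at hB'
          obtain ⟨B, hBf, rfl⟩ := hB'
          rw [mem_filter] at hBf
          obtain ⟨y, hy⟩ := hX A₀ hA₀ B hBf.1
          rw [mem_inter] at hy
          have hym : y ≠ m := fun e => hmA₀ (e ▸ hy.1)
          exact ⟨y, mem_inter.2 ⟨mem_erase.2 ⟨hym, hy.2⟩, hy.1⟩⟩
        have hb2 := card_le_of_meets hA₀p.1 hA₀p.2 (props1 G hG) hmeet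
        rw [← hG1] at hb2
        omega
    · have hF1ne : F1.Nonempty := nonempty_iff_ne_empty.2 hF1e
      have hF0ne : F0.Nonempty := ne0 F hF hcompF hFne
      by_cases hG1e : G1 = ∅
      · -- G1 empty, F1 nonempty: symmetric
        have hGG0 : G = G0 := by
          rw [hG0, eq_comm, filter_eq_self]
          intro B hB hmB
          have : B.erase m ∈ G1 := by
            rw [hG1, mem_image]
            exact ⟨B, mem_filter.2 ⟨hB, hmB⟩, rfl⟩
          rw [hG1e] at this
          exact notMem_empty _ this
        have propsGm : ∀ B ∈ G, B ⊆ range m ∧ B.card = k := by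
          rw [hGG0]; exact props0 G hG
        have hXF0G : XInt F0 G := fun A hA B hB => hX A (mem_filter.1 hA).1 B hB
        have hb1 := ih m (by omega) k F0 G hk hmk (props0 F hF) propsGm hXF0G hF0ne hGne
        obtain ⟨B₀, hB₀⟩ := hGne
        have hB₀p := propsGm B₀ hB₀
        have hmB₀ : m ∉ B₀ := fun hc => by
          have := mem_range.1 (hB₀p.1 hc); omega
        have hmeet : ∀ A' ∈ F1, (A' ∩ B₀).Nonempty := by
          intro A' hA'
          rw [hF1, mem_image] at hA'
          obtain ⟨A, hAf, rfl⟩ := hA'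
          rw [mem_filter] at hAf
          obtain ⟨y, hy⟩ := hX A hAf.1 B₀ hB₀
          rw [mem_inter] at hy
          have hym : y ≠ m := fun e => hmB₀ (e ▸ hy.2)
          exact ⟨y, mem_inter.2 ⟨mem_erase.2 ⟨hym, hy.1⟩, hy.2⟩⟩
        have hb2 := card_le_of_meets hB₀p.1 hB₀p.2 (props1 F hF) hmeet
        rw [← hF1] at hb2
        omega
      · -- both nonempty
        have hG1ne : G1.Nonempty := nonempty_iff_ne_empty.2 hG1e
        have hG0ne : G0.Nonempty := ne0 G hG hcompG hGne
        have hXF0G0 : XInt F0 G0 := fun A hA B hB =>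
          hX A (mem_filter.1 hA).1 B (mem_filter.1 hB).1
        have hb1 := ih m (by omega) k F0 G0 hk hmk (props0 F hF) (props0 G hG) hXF0G0
          hF0ne hG0ne
        have hb2 := ih m (by omega) (k - 1) F1 G1 (by omega) (by omega)
          (by rw [hF1]; exact props1 F hF) (by rw [hG1]; exact props1 G hG) hXF1G1 hF1ne hG1ne
        have p3 : Nat.choose (m - (k - 1)) (k - 1)
            = Nat.choose (m - k) (k - 1) + Nat.choose (m - k) (k - 2) := by
          have := Nat.choose_succ_succ' (m - k) (k - 2)
          rw [show k - 2 + 1 = k - 1 by omega] at this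
          rw [show m - (k - 1) = m - k + 1 by omega]
          omega
        have p4 : 1 ≤ Nat.choose (m - k) (k - 2) := Nat.choose_pos (by omega)
        have q3 : Nat.choose (m - (k - 1)) (k - 1) ≤ Nat.choose m (k - 1) :=
          Nat.choose_le_choose (k - 1) (by omega)
        omega

end FT
namespace BK
open Finset

variable {n k : ℕ}

abbrev V (n k : ℕ) := {A : Finset (Fin n) // A.card = k ∨ A.card = n - k}

section Basic
variable (n k)
def XS : Finset (V n k) := Finset.univ.filter (fun v => v.1.card = k)
def YS : Finset (V n k) := Finset.univ.filter (fun v => v.1.card = n - k)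
end Basic

variable (hk : 2 ≤ k) (hn : 2 * k + 1 ≤ n)
include hk hn

lemma kne : k ≠ n - k := by omega

lemma mem_XS {v : V n k} : v ∈ XS n k ↔ v.1.card = k := by
  simp [XS]

lemma mem_YS {v : V n k} : v ∈ YS n k ↔ v.1.card = n - k := by
  simp [YS]

lemma XS_disj_YS : ∀ v : V n k, v ∈ XS n k → v ∈ YS n k → False := by
  intro v h1 h2
  rw [mem_XS hk hn] at h1
  rw [mem_YS hk hn] at h2
  omega

lemma mem_XS_or_YS (v : V n k) : v ∈ XS n k ∨ v ∈ YS n k := by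
  rcases v.2 with h | h
  · exact Or.inl ((mem_XS hk hn).2 h)
  · exact Or.inr ((mem_YS hk hn).2 h)

lemma card_XS : (XS n k).card = Nat.choose n k := by
  have hP : (powersetCard k (univ : Finset (Fin n))).card = Nat.choose n k := by
    rw [card_powersetCard, card_univ, Fintype.card_fin]
  rw [← hP]
  apply card_bij (fun v _ => v.1)
  · intro v hv
    rw [mem_powersetCard]
    exact ⟨subset_univ _, (mem_XS hk hn).1 hv⟩
  · intro v _ w _ h
    exact Subtype.ext h
  · intro S hS
    rw [mem_powersetCard] at hS
    exact ⟨⟨S, Or.inl hS.2⟩, (mem_XS hk hn).2 hS.2, rfl⟩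

lemma card_YS : (YS n k).card = Nat.choose n k := by
  have hP : (powersetCard (n - k) (univ : Finset (Fin n))).card = Nat.choose n k := by
    rw [card_powersetCard, card_univ, Fintype.card_fin]
    exact Nat.choose_symm (by omega : k ≤ n)
  rw [← hP]
  apply card_bij (fun v _ => v.1)
  · intro v hv
    rw [mem_powersetCard]
    exact ⟨subset_univ _, (mem_YS hk hn).1 hv⟩
  · intro v _ w _ h
    exact Subtype.ext h
  · intro S hS
    rw [mem_powersetCard] at hS
    exact ⟨⟨S, Or.inr hS.2⟩, (mem_YS hk hn).2 hS.2, rfl⟩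

lemma adj_iff {v w : V n k} (hv : v ∈ XS n k) (hw : w ∈ YS n k) :
    (bipartiteKneser n k).Adj v w ↔ v.1 ⊆ w.1 := by
  rw [mem_XS hk hn] at hv
  rw [mem_YS hk hn] at hw
  constructor
  · rintro (h | h)
    · exact h.1
    · exfalso
      have := card_le_card h.1
      have := h.2
      have hwv : ¬ w.1 ⊆ v.1 := fun hs => by
        have := card_le_card hs; omega
      exact hwv h.1
  · intro h
    left
    refine ⟨h, fun hs => ?_⟩
    have := card_le_card hs
    omega

lemma not_adj_XX {v w : V n k} (hv : v ∈ XS n k) (hw : w ∈ XS n k) :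
    ¬ (bipartiteKneser n k).Adj v w := by
  rw [mem_XS hk hn] at hv hw
  rintro (h | h)
  · have h1 := card_le_card h.1
    have h2 : v.1 ≠ w.1 := h.2 ∘ (fun e => e ▸ subset_rfl)
    have : v.1 = w.1 := eq_of_subset_of_card_le h.1 (by omega)
    exact h2 this
  · have h1 := card_le_card h.1
    have : w.1 = v.1 := eq_of_subset_of_card_le h.1 (by omega)
    exact h.2 (this ▸ subset_rfl)

lemma not_adj_YY {v w : V n k} (hv : v ∈ YS n k) (hw : w ∈ YS n k) :
    ¬ (bipartiteKneser n k).Adj v w := by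
  rw [mem_YS hk hn] at hv hw
  rintro (h | h)
  · have h1 := card_le_card h.1
    have : v.1 = w.1 := eq_of_subset_of_card_le h.1 (by omega)
    exact h.2 (this ▸ subset_rfl)
  · have h1 := card_le_card h.1
    have : w.1 = v.1 := eq_of_subset_of_card_le h.1 (by omega)
    exact h.2 (this ▸ subset_rfl)

/-- number of `k`-subsets of a fixed `(n-k)`-set vertex -/
lemma card_subs {w : V n k} (hw : w ∈ YS n k) :
    ((XS n k).filter (fun v => v.1 ⊆ w.1)).card = Nat.choose (n - k) k := by
  rw [mem_YS hk hn] at hw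
  have hP : (powersetCard k w.1).card = Nat.choose (n - k) k := by
    rw [card_powersetCard, hw]
  rw [← hP]
  apply card_bij (fun v _ => v.1)
  · intro v hv
    rw [mem_filter] at hv
    rw [mem_powersetCard]
    exact ⟨hv.2, (mem_XS hk hn).1 hv.1⟩
  · intro v _ u _ h
    exact Subtype.ext h
  · intro S hS
    rw [mem_powersetCard] at hS
    exact ⟨⟨S, Or.inl hS.2⟩, mem_filter.2 ⟨(mem_XS hk hn).2 hS.2, hS.1⟩, rfl⟩

/-- number of `(n-k)`-supersets of a fixed `k`-set vertex -/
lemma card_sups {v : V n k} (hv : v ∈ XS n k) :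
    ((YS n k).filter (fun w => v.1 ⊆ w.1)).card = Nat.choose (n - k) k := by
  rw [mem_XS hk hn] at hv
  have hcompl : (Finset.univ \ v.1).card = n - k := by
    rw [card_sdiff_of_subset (subset_univ _), card_univ, Fintype.card_fin, hv]
  have hsymm : Nat.choose (n - k) (n - 2 * k) = Nat.choose (n - k) k := by
    rw [show n - 2 * k = (n - k) - k by omega]
    exact Nat.choose_symm (by omega)
  have hP : (powersetCard (n - 2 * k) (univ \ v.1)).card = Nat.choose (n - k) k := by
    rw [card_powersetCard, hcompl, hsymm]
  rw [← hP]
  apply card_bij (fun w _ => w.1 \ v.1)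
  · intro w hw
    rw [mem_filter] at hw
    rw [mem_powersetCard]
    constructor
    · intro x hx
      rw [mem_sdiff] at hx ⊢
      exact ⟨mem_univ _, hx.2⟩
    · rw [card_sdiff_of_subset hw.2, (mem_YS hk hn).1 hw.1, hv]
      omega
  · intro w hw u hu h
    rw [mem_filter] at hw hu
    apply Subtype.ext
    have ew : w.1 = v.1 ∪ (w.1 \ v.1) := by rw [union_sdiff_of_subset hw.2]
    have eu : u.1 = v.1 ∪ (u.1 \ v.1) := by rw [union_sdiff_of_subset hu.2]
    rw [ew, eu, h]
  · intro S hS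
    rw [mem_powersetCard] at hS
    have hdisj : Disjoint v.1 S := by
      rw [disjoint_right]
      intro x hxS hxv
      have := hS.1 hxS
      rw [mem_sdiff] at this
      exact this.2 hxv
    have hcard : (v.1 ∪ S).card = n - k := by
      rw [card_union_of_disjoint hdisj, hv, hS.2]
      omega
    refine ⟨⟨v.1 ∪ S, Or.inr hcard⟩, mem_filter.2 ⟨(mem_YS hk hn).2 hcard, subset_union_left⟩, ?_⟩
    rw [union_sdiff_cancel_left hdisj]


/-! ## Components of the graph minus a separator -/

open scoped Classical in
/-- the bipartite Kneser graph with a vertex set `S` removed -/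
noncomputable def GS (S : Finset (V n k)) : SimpleGraph (V n k) where
  Adj a b := (bipartiteKneser n k).Adj a b ∧ a ∉ S ∧ b ∉ S
  symm := ⟨fun a b h => ⟨h.1.symm, h.2.2, h.2.1⟩⟩
  loopless := ⟨fun a h => (bipartiteKneser n k).loopless.irrefl a h.1⟩

open scoped Classical in
/-- the component of `v₀` in `G - S` -/
noncomputable def comp (S : Finset (V n k)) (v₀ : V n k) : Finset (V n k) :=
  Finset.univ.filter (fun u => (GS S).Reachable v₀ u)

omit hk hn in
lemma reach_prop {S : Finset (V n k)} {a b : V n k} (h : (GS S).Reachable a b) :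
    a = b ∨ (a ∉ S ∧ b ∉ S) := by
  obtain ⟨w⟩ := h
  induction w with
  | nil => exact Or.inl rfl
  | cons h p ih =>
    right
    refine ⟨h.2.1, ?_⟩
    rcases ih with rfl | h2
    · exact h.2.2
    · exact h2.2

omit hk hn in
lemma mem_comp {S : Finset (V n k)} {v₀ u : V n k} :
    u ∈ comp S v₀ ↔ (GS S).Reachable v₀ u := by
  simp [comp]

omit hk hn in
lemma comp_not_mem_S {S : Finset (V n k)} {v₀ u : V n k} (hv₀ : v₀ ∉ S)
    (hu : u ∈ comp S v₀) : u ∉ S := by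
  rcases reach_prop (mem_comp.1 hu) with rfl | h
  · exact hv₀
  · exact h.2

omit hk hn in
lemma comp_closed {S : Finset (V n k)} {v₀ u w : V n k} (hu : u ∈ comp S v₀)
    (hadj : (bipartiteKneser n k).Adj u w) (huS : u ∉ S) (hwS : w ∉ S) : w ∈ comp S v₀ :=
  mem_comp.2 ((mem_comp.1 hu).trans (SimpleGraph.Adj.reachable ⟨hadj, huS, hwS⟩))

/-- arithmetic consequences of the density hypothesis -/
lemma arith (h : 2 * Nat.choose n k ≤ 3 * Nat.choose (n - k) k) :
    6 ≤ Nat.choose n k ∧ Nat.choose (n - k) k ≤ Nat.choose n k ∧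
      Nat.choose n k + 2 ≤ 2 * Nat.choose (n - k) k := by
  have h1 : Nat.choose (k + 2) k ≤ Nat.choose n k := Nat.choose_le_choose k (by omega)
  have h2 : Nat.choose (k + 2) k = Nat.choose (k + 2) 2 := by
    have := Nat.choose_symm (show 2 ≤ k + 2 by omega)
    rwa [show k + 2 - 2 = k by omega] at this
  have h3 : Nat.choose 4 2 ≤ Nat.choose (k + 2) 2 := Nat.choose_le_choose 2 (by omega)
  have h4 : Nat.choose 4 2 = 6 := by decide
  have h6 : 6 ≤ Nat.choose n k := by omega
  have h5 : Nat.choose (n - k) k ≤ Nat.choose n k := Nat.choose_le_choose k (by omega)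
  exact ⟨h6, h5, by omega⟩

/-- bridge to the cross-intersecting theorem -/
lemma ft_bridge {P Q : Finset (V n k)} (hP : P ⊆ XS n k) (hQ : Q ⊆ YS n k)
    (hPne : P.Nonempty) (hQne : Q.Nonempty)
    (hfree : ∀ p ∈ P, ∀ q ∈ Q, ¬ p.1 ⊆ q.1) :
    P.card + Q.card ≤ Nat.choose n k - Nat.choose (n - k) k + 1 := by
  classical
  set F := P.image (fun v => v.1.image Fin.val) with hF
  set G := Q.image (fun v => (Finset.univ \ v.1).image Fin.val) with hG
  have hvalinj : ∀ (s t : Finset (Fin n)), s.image Fin.val = t.image Fin.val → s = t :=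
    fun s t h => Finset.image_injective Fin.val_injective h
  have hcardF : F.card = P.card := by
    rw [hF]
    apply card_image_of_injOn
    intro a _ b _ hab
    exact Subtype.ext (hvalinj _ _ hab)
  have hcardG : G.card = Q.card := by
    rw [hG]
    apply card_image_of_injOn
    intro a ha b hb hab
    have h2 := hvalinj _ _ hab
    apply Subtype.ext
    have e1 : (univ : Finset (Fin n)) \ (univ \ a.1) = a.1 := by
      rw [sdiff_sdiff_right_self, inf_eq_inter, inter_eq_right]
      exact subset_univ _
    have e2 : (univ : Finset (Fin n)) \ (univ \ b.1) = b.1 := by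
      rw [sdiff_sdiff_right_self, inf_eq_inter, inter_eq_right]
      exact subset_univ _
    rw [← e1, ← e2, h2]
  have hpropF : ∀ A ∈ F, A ⊆ Finset.range n ∧ A.card = k := by
    intro A hA
    rw [hF, mem_image] at hA
    obtain ⟨v, hv, rfl⟩ := hA
    constructor
    · intro x hx
      rw [mem_image] at hx
      obtain ⟨y, _, rfl⟩ := hx
      exact mem_range.2 y.2
    · rw [card_image_of_injective _ Fin.val_injective]
      exact (mem_XS hk hn).1 (hP hv)
  have hpropG : ∀ B ∈ G, B ⊆ Finset.range n ∧ B.card = k := by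
    intro B hB
    rw [hG, mem_image] at hB
    obtain ⟨v, hv, rfl⟩ := hB
    constructor
    · intro x hx
      rw [mem_image] at hx
      obtain ⟨y, _, rfl⟩ := hx
      exact mem_range.2 y.2
    · rw [card_image_of_injective _ Fin.val_injective, card_sdiff_of_subset (subset_univ _), card_univ,
        Fintype.card_fin, (mem_YS hk hn).1 (hQ hv)]
      omega
  have hXint : FT.XInt F G := by
    intro A hA B hB
    rw [hF, mem_image] at hA
    obtain ⟨p, hp, rfl⟩ := hA
    rw [hG, mem_image] at hB
    obtain ⟨q, hq, rfl⟩ := hB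
    have := hfree p hp q hq
    rw [not_subset] at this
    obtain ⟨x, hx1, hx2⟩ := this
    refine ⟨x.val, mem_inter.2 ⟨mem_image_of_mem _ hx1, mem_image_of_mem _ ?_⟩⟩
    rw [mem_sdiff]
    exact ⟨mem_univ _, hx2⟩
  have hFne : F.Nonempty := hPne.image _
  have hGne : G.Nonempty := hQne.image _
  have := FT.ft_main n k F G (by omega) (by omega) hpropF hpropG hXint hFne hGne
  omega

/-- the key lemma: any small separator leaves a good (large, mixed) component -/
lemma exists_good {S : Finset (V n k)} (hScard : S.card + 1 ≤ Nat.choose n k)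
    (h : 2 * Nat.choose n k ≤ 3 * Nat.choose (n - k) k) :
    ∃ v₀ : V n k, v₀ ∉ S ∧
      ((Nat.choose n k - Nat.choose (n - k) k + 1 ≤ ((comp S v₀) ∩ XS n k).card ∧
        ((comp S v₀) ∩ YS n k).Nonempty) ∨
       (Nat.choose n k - Nat.choose (n - k) k + 1 ≤ ((comp S v₀) ∩ YS n k).card ∧
        ((comp S v₀) ∩ XS n k).Nonempty)) := by
  classical
  obtain ⟨hN6, hdN, h2d⟩ := arith hk hn h
  by_contra hcon
  push_neg at hcon
  have hcards : (XS n k \ S).card + (YS n k \ S).card + S.card ≥ 2 * Nat.choose n k := by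
    have h1 : (XS n k).card ≤ (XS n k \ S).card + (S ∩ XS n k).card := by
      have hsub : XS n k ⊆ (XS n k \ S) ∪ (S ∩ XS n k) := by
        intro v hv
        by_cases hvS : v ∈ S
        · exact mem_union_right _ (mem_inter.2 ⟨hvS, hv⟩)
        · exact mem_union_left _ (mem_sdiff.2 ⟨hv, hvS⟩)
      calc (XS n k).card ≤ _ := card_le_card hsub
        _ ≤ _ := card_union_le _ _
    have h2 : (YS n k).card ≤ (YS n k \ S).card + (S ∩ YS n k).card := by
      have hsub : YS n k ⊆ (YS n k \ S) ∪ (S ∩ YS n k) := by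
        intro v hv
        by_cases hvS : v ∈ S
        · exact mem_union_right _ (mem_inter.2 ⟨hvS, hv⟩)
        · exact mem_union_left _ (mem_sdiff.2 ⟨hv, hvS⟩)
      calc (YS n k).card ≤ _ := card_le_card hsub
        _ ≤ _ := card_union_le _ _
    have h3 : (S ∩ XS n k).card + (S ∩ YS n k).card ≤ S.card := by
      rw [← card_union_of_disjoint]
      · apply card_le_card
        intro v hv
        rcases mem_union.1 hv with hv | hv
        · exact (mem_inter.1 hv).1
        · exact (mem_inter.1 hv).1
      · rw [disjoint_left]
        intro v h1 h2
        exact XS_disj_YS hk hn v (mem_inter.1 h1).2 (mem_inter.1 h2).2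
    have h4 := card_XS hk hn (n := n) (k := k)
    have h5 := card_YS hk hn (n := n) (k := k)
    omega
  have hXS'ne : (XS n k \ S).Nonempty := by
    rw [← card_pos]
    by_contra hc
    push_neg at hc
    have h0 : (XS n k \ S).card = 0 := by omega
    have hsub : XS n k ⊆ S := by
      intro v hv
      by_contra hvS
      have hm : v ∈ XS n k \ S := mem_sdiff.2 ⟨hv, hvS⟩
      have := card_pos.2 ⟨v, hm⟩
      omega
    have := card_le_card hsub
    have h4 := card_XS hk hn (n := n) (k := k)
    omega
  have hYS'ne : (YS n k \ S).Nonempty := by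
    rw [← card_pos]
    by_contra hc
    push_neg at hc
    have h0 : (YS n k \ S).card = 0 := by omega
    have hsub : YS n k ⊆ S := by
      intro v hv
      by_contra hvS
      have hm : v ∈ YS n k \ S := mem_sdiff.2 ⟨hv, hvS⟩
      have := card_pos.2 ⟨v, hm⟩
      omega
    have := card_le_card hsub
    have h5 := card_YS hk hn (n := n) (k := k)
    omega
  by_cases hmix : ∃ A ∈ XS n k \ S, ∃ B ∈ YS n k \ S, (GS S).Reachable A B
  · obtain ⟨A₁, hA₁, B₁, hB₁, hreach⟩ := hmix
    have hA₁S : A₁ ∉ S := (mem_sdiff.1 hA₁).2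
    have hB₁S : B₁ ∉ S := (mem_sdiff.1 hB₁).2
    have hκXsub : comp S A₁ ∩ XS n k ⊆ XS n k \ S := by
      intro u hu
      rw [mem_inter] at hu
      exact mem_sdiff.2 ⟨hu.2, comp_not_mem_S hA₁S hu.1⟩
    have hκYsub : comp S A₁ ∩ YS n k ⊆ YS n k \ S := by
      intro u hu
      rw [mem_inter] at hu
      exact mem_sdiff.2 ⟨hu.2, comp_not_mem_S hA₁S hu.1⟩
    have hκXne : (comp S A₁ ∩ XS n k).Nonempty :=
      ⟨A₁, mem_inter.2 ⟨mem_comp.2 (SimpleGraph.Reachable.refl _), (mem_sdiff.1 hA₁).1⟩⟩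
    have hκYne : (comp S A₁ ∩ YS n k).Nonempty :=
      ⟨B₁, mem_inter.2 ⟨mem_comp.2 hreach, (mem_sdiff.1 hB₁).1⟩⟩
    have hbad := hcon A₁ hA₁S
    have hκXcard : (comp S A₁ ∩ XS n k).card
        ≤ Nat.choose n k - Nat.choose (n - k) k := by
      by_contra hc
      push_neg at hc
      exact nonempty_iff_ne_empty.1 hκYne (hbad.1 (by omega))
    have hκYcard : (comp S A₁ ∩ YS n k).card
        ≤ Nat.choose n k - Nat.choose (n - k) k := by
      by_contra hc
      push_neg at hc
      exact nonempty_iff_ne_empty.1 hκXne (hbad.2 (by omega))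
    have hFcard : ((XS n k \ S) \ (comp S A₁ ∩ XS n k)).card
        + (comp S A₁ ∩ XS n k).card = (XS n k \ S).card :=
      card_sdiff_add_card_eq_card hκXsub
    have hHcard : ((YS n k \ S) \ (comp S A₁ ∩ YS n k)).card
        + (comp S A₁ ∩ YS n k).card = (YS n k \ S).card :=
      card_sdiff_add_card_eq_card hκYsub
    have hFsub : (XS n k \ S) \ (comp S A₁ ∩ XS n k) ⊆ XS n k :=
      fun u hu => (mem_sdiff.1 (mem_sdiff.1 hu).1).1
    have hHsub : (YS n k \ S) \ (comp S A₁ ∩ YS n k) ⊆ YS n k :=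
      fun u hu => (mem_sdiff.1 (mem_sdiff.1 hu).1).1
    have hκXX : comp S A₁ ∩ XS n k ⊆ XS n k := fun u hu => (mem_inter.1 hu).2
    have hκYY : comp S A₁ ∩ YS n k ⊆ YS n k := fun u hu => (mem_inter.1 hu).2
    have hfreeFκY : ∀ p ∈ (XS n k \ S) \ (comp S A₁ ∩ XS n k),
        ∀ q ∈ comp S A₁ ∩ YS n k, ¬ p.1 ⊆ q.1 := by
      intro p hp q hq hsub
      have hpX : p ∈ XS n k \ S := (mem_sdiff.1 hp).1
      have hpS : p ∉ S := (mem_sdiff.1 hpX).2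
      have hqS : q ∉ S := comp_not_mem_S hA₁S (mem_inter.1 hq).1
      have hadj : (bipartiteKneser n k).Adj q p :=
        ((adj_iff hk hn (mem_sdiff.1 hpX).1 (mem_inter.1 hq).2).2 hsub).symm
      have hpκ : p ∈ comp S A₁ := comp_closed (mem_inter.1 hq).1 hadj hqS hpS
      exact (mem_sdiff.1 hp).2 (mem_inter.2 ⟨hpκ, (mem_sdiff.1 hpX).1⟩)
    have hfreeκXH : ∀ p ∈ comp S A₁ ∩ XS n k,
        ∀ q ∈ (YS n k \ S) \ (comp S A₁ ∩ YS n k), ¬ p.1 ⊆ q.1 := by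
      intro p hp q hq hsub
      have hqY : q ∈ YS n k \ S := (mem_sdiff.1 hq).1
      have hqS : q ∉ S := (mem_sdiff.1 hqY).2
      have hpS : p ∉ S := comp_not_mem_S hA₁S (mem_inter.1 hp).1
      have hadj : (bipartiteKneser n k).Adj p q :=
        (adj_iff hk hn (mem_inter.1 hp).2 (mem_sdiff.1 hqY).1).2 hsub
      have hqκ : q ∈ comp S A₁ := comp_closed (mem_inter.1 hp).1 hadj hpS hqS
      exact (mem_sdiff.1 hq).2 (mem_inter.2 ⟨hqκ, (mem_sdiff.1 hqY).1⟩)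
    have hκXpos : 1 ≤ (comp S A₁ ∩ XS n k).card := card_pos.2 hκXne
    have hκYpos : 1 ≤ (comp S A₁ ∩ YS n k).card := card_pos.2 hκYne
    by_cases hFne : ((XS n k \ S) \ (comp S A₁ ∩ XS n k)).Nonempty
    · by_cases hHne : ((YS n k \ S) \ (comp S A₁ ∩ YS n k)).Nonempty
      · have b1 := ft_bridge hk hn hFsub hκYY hFne hκYne hfreeFκY
        have b2 := ft_bridge hk hn hκXX hHsub hκXne hHne hfreeκXH
        omega
      · have hH0 : ((YS n k \ S) \ (comp S A₁ ∩ YS n k)).card = 0 := by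
          rw [card_eq_zero, ← not_nonempty_iff_eq_empty]
          exact hHne
        have b1 := ft_bridge hk hn hFsub hκYY hFne hκYne hfreeFκY
        omega
    · have hF0 : ((XS n k \ S) \ (comp S A₁ ∩ XS n k)).card = 0 := by
        rw [card_eq_zero, ← not_nonempty_iff_eq_empty]
        exact hFne
      by_cases hHne : ((YS n k \ S) \ (comp S A₁ ∩ YS n k)).Nonempty
      · have b2 := ft_bridge hk hn hκXX hHsub hκXne hHne hfreeκXH
        omega
      · have hH0 : ((YS n k \ S) \ (comp S A₁ ∩ YS n k)).card = 0 := by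
          rw [card_eq_zero, ← not_nonempty_iff_eq_empty]
          exact hHne
        omega
  · have hfree : ∀ p ∈ XS n k \ S, ∀ q ∈ YS n k \ S, ¬ p.1 ⊆ q.1 := by
      intro p hp q hq hsub
      apply hmix
      refine ⟨p, hp, q, hq, SimpleGraph.Adj.reachable ?_⟩
      exact ⟨(adj_iff hk hn (mem_sdiff.1 hp).1 (mem_sdiff.1 hq).1).2 hsub,
        (mem_sdiff.1 hp).2, (mem_sdiff.1 hq).2⟩
    have hb := ft_bridge hk hn (sdiff_subset) (sdiff_subset) hXS'ne hYS'ne hfree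
    have hd1 : 1 ≤ Nat.choose (n - k) k := Nat.choose_pos (by omega)
    omega


/-- counting non-subsets -/
lemma count_nonsub {w : V n k} (hw : w ∈ YS n k) :
    ((XS n k).filter (fun v => ¬ v.1 ⊆ w.1)).card
      = Nat.choose n k - Nat.choose (n - k) k := by
  have h1 := card_filter_add_card_filter_not (s := XS n k)
    (p := fun v => v.1 ⊆ w.1)
  have h2 := card_subs hk hn hw
  have h3 := card_XS hk hn (n := n) (k := k)
  omega

lemma count_nonsup {v : V n k} (hv : v ∈ XS n k) :
    ((YS n k).filter (fun w => ¬ v.1 ⊆ w.1)).card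
      = Nat.choose n k - Nat.choose (n - k) k := by
  have h1 := card_filter_add_card_filter_not (s := YS n k)
    (p := fun w => v.1 ⊆ w.1)
  have h2 := card_sups hk hn hv
  have h3 := card_YS hk hn (n := n) (k := k)
  omega

/-- two good components must touch (share a vertex or an edge) -/
lemma good_touch {S S' : Finset (V n k)} {a b : V n k}
    (h : 2 * Nat.choose n k ≤ 3 * Nat.choose (n - k) k)
    (hga : (Nat.choose n k - Nat.choose (n - k) k + 1 ≤ ((comp S a) ∩ XS n k).card ∧
        ((comp S a) ∩ YS n k).Nonempty) ∨
      (Nat.choose n k - Nat.choose (n - k) k + 1 ≤ ((comp S a) ∩ YS n k).card ∧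
        ((comp S a) ∩ XS n k).Nonempty))
    (hgb : (Nat.choose n k - Nat.choose (n - k) k + 1 ≤ ((comp S' b) ∩ XS n k).card ∧
        ((comp S' b) ∩ YS n k).Nonempty) ∨
      (Nat.choose n k - Nat.choose (n - k) k + 1 ≤ ((comp S' b) ∩ YS n k).card ∧
        ((comp S' b) ∩ XS n k).Nonempty)) :
    ∃ x ∈ comp S a, ∃ y ∈ comp S' b, x = y ∨ (bipartiteKneser n k).Adj x y := by
  classical
  by_contra hcon
  push_neg at hcon
  obtain ⟨hN6, hdN, h2d⟩ := arith hk hn h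
  have hbY : ((comp S' b) ∩ YS n k).Nonempty := by
    rcases hgb with hg | hg
    · exact hg.2
    · obtain ⟨y, hy⟩ := card_pos.1 (by omega : 0 < ((comp S' b) ∩ YS n k).card)
      exact ⟨y, hy⟩
  have hbX : ((comp S' b) ∩ XS n k).Nonempty := by
    rcases hgb with hg | hg
    · obtain ⟨y, hy⟩ := card_pos.1 (by omega : 0 < ((comp S' b) ∩ XS n k).card)
      exact ⟨y, hy⟩
    · exact hg.2
  rcases hga with hg | hg
  · -- comp S a is X-big
    obtain ⟨B, hB⟩ := hbY
    rw [mem_inter] at hB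
    have hsub : (comp S a) ∩ XS n k ⊆ (XS n k).filter (fun v => ¬ v.1 ⊆ B.1) := by
      intro A hA
      rw [mem_inter] at hA
      rw [mem_filter]
      refine ⟨hA.2, fun hAB => ?_⟩
      have hadj : (bipartiteKneser n k).Adj A B := (adj_iff hk hn hA.2 hB.2).2 hAB
      exact (hcon A hA.1 B hB.1).2 hadj
    have := card_le_card hsub
    rw [count_nonsub hk hn hB.2] at this
    omega
  · -- comp S a is Y-big
    obtain ⟨A, hA⟩ := hbX
    rw [mem_inter] at hA
    have hsub : (comp S a) ∩ YS n k ⊆ (YS n k).filter (fun w => ¬ A.1 ⊆ w.1) := by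
      intro B hB
      rw [mem_inter] at hB
      rw [mem_filter]
      refine ⟨hB.2, fun hAB => ?_⟩
      have hadj : (bipartiteKneser n k).Adj B A := ((adj_iff hk hn hA.2 hB.2).2 hAB).symm
      exact (hcon B hB.1 A hA.1).2 hadj
    have := card_le_card hsub
    rw [count_nonsup hk hn hA.2] at this
    omega

/-- the lower bound: every tree decomposition has a bag of size at least `C(n,k)` -/
lemma bag_lower_bound {ι : Type} [Fintype ι] {T : SimpleGraph ι} (hT : T.IsTree)
    (D : TreeDecomp (bipartiteKneser n k) T)
    (h : 2 * Nat.choose n k ≤ 3 * Nat.choose (n - k) k) :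
    ∃ t : ι, Nat.choose n k ≤ (D.bag t).card := by
  classical
  by_contra hcon
  push_neg at hcon
  -- bag nodes of a single vertex are connected avoiding t
  have subtree_reach : ∀ (t : ι) (v : V n k), v ∉ D.bag t → ∀ s s', v ∈ D.bag s →
      v ∈ D.bag s' → (TD.K T t).Reachable s s' := by
    intro t v hv s s' hs hs'
    have hre := (D.subtree v).preconnected ⟨s, hs⟩ ⟨s', hs'⟩
    have key : ∀ (a b : {i // i ∈ {i : ι | v ∈ D.bag i}})
        (_ : (T.induce {i : ι | v ∈ D.bag i}).Walk a b),
        (TD.K T t).Reachable a.1 b.1 := by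
      intro a b w
      induction w with
      | nil => exact SimpleGraph.Reachable.refl _
      | @cons x y _ hadj p ih =>
        exact (SimpleGraph.Adj.reachable (show (TD.K T t).Adj x.1 y.1 from
          ⟨hadj, fun e => hv (e ▸ x.2), fun e => hv (e ▸ y.2)⟩)).trans ih
    obtain ⟨w⟩ := hre
    exact key _ _ w
  have comp_reach : ∀ (t : ι) (a b : V n k) (w : (GS (D.bag t)).Walk a b),
      a ∉ D.bag t → ∀ s s', a ∈ D.bag s → b ∈ D.bag s' → (TD.K T t).Reachable s s' := by
    intro t a b w
    induction w with
    | nil =>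
      intro ha s s' hs hs'
      exact subtree_reach t _ ha s s' hs hs'
    | @cons u v _ hadj p ih =>
      intro ha s s' hs hs'
      obtain ⟨s₀, hs₀u, hs₀v⟩ := D.edgeCover u v hadj.1
      exact (subtree_reach t u ha s s₀ hs hs₀u).trans (ih hadj.2.2 s₀ s' hs₀v hs')
  -- choose good components, base nodes, directions
  have hgood := fun t : ι => exists_good hk hn (hcon t) h
  choose v₀ hv₀ hgoodp using hgood
  choose s₀ hs₀p using fun t : ι => D.cover (v₀ t)
  have hs₀ne : ∀ t, s₀ t ≠ t := by
    intro t e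
    have h2 := hs₀p t
    rw [e] at h2
    exact (hv₀ t) h2
  choose f hfadj hfreach using fun t : ι => TD.exists_neighbor (T := T) hT (hs₀ne t)
  -- P-property: from f t one reaches (avoiding t) every bag node of the good component
  have hP : ∀ t : ι, ∀ u ∈ comp (D.bag t) (v₀ t), ∀ s, u ∈ D.bag s →
      (TD.K T t).Reachable (f t) s := by
    intro t u hu s hs
    obtain ⟨w⟩ := mem_comp.1 hu
    exact (hfreach t).trans (comp_reach t (v₀ t) u w (hv₀ t) (s₀ t) s (hs₀p t) hs)
  -- minimal side
  have hne : Nonempty ι := hT.isConnected.nonempty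
  obtain ⟨tst, -, hmin⟩ := Finset.exists_min_image Finset.univ
    (fun t => (Finset.univ.filter (fun s => (TD.K T t).Reachable (f t) s)).card)
    ⟨Classical.arbitrary ι, mem_univ _⟩
  have hfin := hmin (f tst) (mem_univ _)
  set t' := f tst with ht'
  have hadjt' : T.Adj tst t' := hfadj tst
  by_cases hcase : ∃ u ∈ comp (D.bag t') (v₀ t'), ∃ s, u ∈ D.bag s ∧
      (TD.K T t').Reachable tst s
  · -- the two good components touch; derive the two-sided contradiction
    obtain ⟨u, hu, su, hsu, hru⟩ := hcase
    obtain ⟨x, hx, y, hy, hxy⟩ := good_touch hk hn h (hgoodp tst) (hgoodp t')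
    obtain ⟨sst, hsstx, hssty⟩ : ∃ sst, x ∈ D.bag sst ∧ y ∈ D.bag sst := by
      rcases hxy with rfl | hadj
      · obtain ⟨s, hs⟩ := D.cover x
        exact ⟨s, hs, hs⟩
      · obtain ⟨s, hs1, hs2⟩ := D.edgeCover x y hadj
        exact ⟨s, hs1, hs2⟩
    have hr1 : (TD.K T tst).Reachable t' sst := hP tst x hx sst hsstx
    have hr2 : (TD.K T t').Reachable tst sst := by
      -- tst ↝ su ↝ sst within K T t'
      refine hru.trans ?_
      -- su is a bag node of u ∈ comp(t'), sst is a bag node of y ∈ comp(t')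
      obtain ⟨w1⟩ := (mem_comp.1 hu).symm.trans (mem_comp.1 hy)
      exact comp_reach t' u y w1 (comp_not_mem_S (hv₀ t') hu) su sst hsu hssty
    have hsst1 : sst ≠ tst := fun e => comp_not_mem_S (hv₀ tst) hx (e ▸ hsstx)
    have hsst2 : sst ≠ t' := fun e => comp_not_mem_S (hv₀ t') hy (e ▸ hssty)
    exact TD.core hT hadjt' hsst1 hsst2 hr1 hr2
  · push_neg at hcase
    set t'' := f t' with ht''
    have htt : t'' ≠ tst := by
      intro e
      have h3 := hP t' (v₀ t') (mem_comp.2 (SimpleGraph.Reachable.refl _)) (s₀ t') (hs₀p t')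
      rw [← ht'', e] at h3
      exact hcase (v₀ t') (mem_comp.2 (SimpleGraph.Reachable.refl _)) (s₀ t') (hs₀p t') h3
    have ht'ne : t' ≠ tst := (T.ne_of_adj hadjt').symm
    have hDsub : Finset.univ.filter (fun s => (TD.K T t').Reachable t'' s) ⊆
        Finset.univ.filter (fun s => (TD.K T tst).Reachable t' s) := by
      intro z hz
      rw [mem_filter] at hz
      obtain ⟨w⟩ := hz.2
      have hav : ∀ s ∈ w.support, s ≠ tst := by
        intro s hs e
        rw [e] at hs
        have hr : (TD.K T t').Reachable t'' tst := ⟨w.takeUntil tst hs⟩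
        have h2 := hP t' (v₀ t') (mem_comp.2 (SimpleGraph.Reachable.refl _)) (s₀ t') (hs₀p t')
        exact hcase (v₀ t') (mem_comp.2 (SimpleGraph.Reachable.refl _)) (s₀ t') (hs₀p t')
          (hr.symm.trans h2)
      have hz' : (TD.K T tst).Reachable t'' z := TD.ktrans w hav
      rw [mem_filter]
      refine ⟨mem_univ _, ?_⟩
      exact (SimpleGraph.Adj.reachable
        (show (TD.K T tst).Adj t' t'' from ⟨hfadj t', ht'ne, htt⟩)).trans hz'
    have hDne : t' ∈ Finset.univ.filter (fun s => (TD.K T tst).Reachable t' s) := by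
      rw [mem_filter]
      exact ⟨mem_univ _, SimpleGraph.Reachable.refl _⟩
    have hDnot : t' ∉ Finset.univ.filter (fun s => (TD.K T t').Reachable t'' s) := by
      rw [mem_filter]
      rintro ⟨-, hr⟩
      have hne2 : t'' ≠ t' := by
        rw [ht'']
        exact (T.ne_of_adj (hfadj t')).symm
      exact TD.kreach_ne hr hne2 rfl
    have hlt : (Finset.univ.filter (fun s => (TD.K T t').Reachable t'' s)).card <
        (Finset.univ.filter (fun s => (TD.K T tst).Reachable t' s)).card := by
      apply card_lt_card
      rw [ssubset_iff_of_subset hDsub]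
      exact ⟨t', hDne, hDnot⟩
    omega


/-! ## Upper bound: the star decomposition -/

lemma d_lt_N : Nat.choose (n - k) k + 1 ≤ Nat.choose n k := by
  have p1 : Nat.choose n k = Nat.choose (n - 1) (k - 1) + Nat.choose (n - 1) k := by
    have h2 := Nat.choose_succ_succ' (n - 1) (k - 1)
    rw [show k - 1 + 1 = k by omega, show n - 1 + 1 = n by omega] at h2
    omega
  have q1 : Nat.choose (n - k) k ≤ Nat.choose (n - 1) k := Nat.choose_le_choose k (by omega)
  have q2 : 1 ≤ Nat.choose (n - 1) (k - 1) := Nat.choose_pos (by omega)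
  omega

/-- bags of the star decomposition -/
def sbag (i : Option (V n k)) : Finset (V n k) :=
  match i with
  | none => XS n k
  | some w => if w ∈ YS n k then insert w ((XS n k).filter (fun v => v.1 ⊆ w.1)) else ∅

/-- the star decomposition of the bipartite Kneser graph -/
def starDecomp : TreeDecomp (bipartiteKneser n k) (TD.star (V n k)) where
  bag := sbag
  cover := by
    intro v
    rcases mem_XS_or_YS hk hn v with hv | hv
    · exact ⟨none, hv⟩
    · refine ⟨some v, ?_⟩
      show v ∈ if v ∈ YS n k then _ else _
      rw [if_pos hv]
      exact mem_insert_self _ _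
  edgeCover := by
    intro u v hadj
    rcases mem_XS_or_YS hk hn u with hu | hu <;> rcases mem_XS_or_YS hk hn v with hv | hv
    · exact absurd hadj (not_adj_XX hk hn hu hv)
    · refine ⟨some v, ?_, ?_⟩
      · show u ∈ if v ∈ YS n k then _ else _
        rw [if_pos hv]
        exact mem_insert_of_mem (mem_filter.2 ⟨hu, (adj_iff hk hn hu hv).1 hadj⟩)
      · show v ∈ if v ∈ YS n k then _ else _
        rw [if_pos hv]
        exact mem_insert_self _ _
    · refine ⟨some u, ?_, ?_⟩
      · show u ∈ if u ∈ YS n k then _ else _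
        rw [if_pos hu]
        exact mem_insert_self _ _
      · show v ∈ if u ∈ YS n k then _ else _
        rw [if_pos hu]
        exact mem_insert_of_mem (mem_filter.2 ⟨hv, (adj_iff hk hn hv hu).1 hadj.symm⟩)
    · exact absurd hadj (not_adj_YY hk hn hu hv)
  subtree := by
    intro v
    rcases mem_XS_or_YS hk hn v with hv | hv
    · -- v is a k-set: its bag nodes are `none` and some `some w`'s, all adjacent to `none`
      have hnone : v ∈ sbag none := hv
      rw [SimpleGraph.connected_iff]
      refine ⟨?_, ?_⟩
      · intro a b
        have key : ∀ c : {i : Option (V n k) // i ∈ {i | v ∈ sbag i}},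
            ((TD.star (V n k)).induce {i | v ∈ sbag i}).Reachable c ⟨none, hnone⟩ := by
          intro c
          obtain ⟨ci, hci⟩ := c
          cases ci with
          | none => exact SimpleGraph.Reachable.refl _
          | some w =>
            refine SimpleGraph.Adj.reachable ?_
            show (TD.star (V n k)).Adj (some w) none
            exact Or.inr ⟨rfl, by simp⟩
        exact (key a).trans (key b).symm
      · exact ⟨⟨none, hnone⟩⟩
    · -- v is an (n-k)-set: its only bag node is `some v`
      have hkey : ∀ i : Option (V n k), v ∈ sbag i → i = some v := by
        intro i hi
        cases i with
        | none => exact absurd hi (fun hc => XS_disj_YS hk hn v hc hv)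
        | some w =>
          by_cases hw : w ∈ YS n k
          · have : v ∈ insert w ((XS n k).filter (fun u => u.1 ⊆ w.1)) := by
              have h2 : v ∈ (if w ∈ YS n k then insert w ((XS n k).filter (fun u => u.1 ⊆ w.1))
                  else ∅) := hi
              rwa [if_pos hw] at h2
            rcases mem_insert.1 this with rfl | hmem
            · rfl
            · exact absurd hv (fun hc => XS_disj_YS hk hn v (mem_filter.1 hmem).1 hc)
          · have h2 : v ∈ (if w ∈ YS n k then insert w ((XS n k).filter (fun u => u.1 ⊆ w.1))
                else ∅) := hi
            rw [if_neg hw] at h2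
            exact absurd h2 (notMem_empty _)
      have hself : v ∈ sbag (some v) := by
        show v ∈ if v ∈ YS n k then _ else _
        rw [if_pos hv]
        exact mem_insert_self _ _
      rw [SimpleGraph.connected_iff]
      refine ⟨?_, ?_⟩
      · intro a b
        have ha := hkey a.1 a.2
        have hb := hkey b.1 b.2
        have : a = b := Subtype.ext (ha.trans hb.symm)
        rw [this]
      · exact ⟨⟨some v, hself⟩⟩

lemma starDecomp_sup :
    (Finset.univ.sup fun i => (((starDecomp hk hn).bag) i).card) = Nat.choose n k := by
  refine le_antisymm (Finset.sup_le fun i _ => ?_) ?_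
  · show (sbag i).card ≤ Nat.choose n k
    cases i with
    | none => exact le_of_eq (card_XS hk hn)
    | some w =>
      show (if w ∈ YS n k then insert w ((XS n k).filter (fun v => v.1 ⊆ w.1)) else ∅).card ≤ _
      split_ifs with hw
      · calc (insert w ((XS n k).filter (fun v => v.1 ⊆ w.1))).card
            ≤ ((XS n k).filter (fun v => v.1 ⊆ w.1)).card + 1 := card_insert_le _ _
          _ = Nat.choose (n - k) k + 1 := by rw [card_subs hk hn hw]
          _ ≤ Nat.choose n k := d_lt_N hk hn
      · simp
  · have h1 : ((starDecomp hk hn).bag none).card = Nat.choose n k := card_XS hk hn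
    rw [← h1]
    exact Finset.le_sup (f := fun i => ((starDecomp hk hn).bag i).card) (mem_univ none)

end BK

/-- Theorem 1.3: if `k ≥ 2`, `n ≥ 2k+1` and `3·C(n−k,k) ≥ 2·C(n,k)`, then the treewidth
of the bipartite Kneser graph `BK(n,k)` is `C(n,k) − 1`. -/
theorem treewidth_bipartiteKneser_eq (n k : ℕ) (hk : 2 ≤ k) (hn : 2 * k + 1 ≤ n)
    (h : 2 * Nat.choose n k ≤ 3 * Nat.choose (n - k) k) :
    treewidth (bipartiteKneser n k) = Nat.choose n k - 1 := by
  classical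
  unfold treewidth
  apply le_antisymm
  · apply Nat.sInf_le
    refine ⟨Option (BK.V n k), inferInstance, TD.star (BK.V n k), TD.star_isTree _,
      BK.starDecomp hk hn, ?_⟩
    rw [BK.starDecomp_sup hk hn]
  · apply le_csInf
    · exact ⟨_, Option (BK.V n k), inferInstance, TD.star (BK.V n k), TD.star_isTree _,
        BK.starDecomp hk hn, rfl⟩
    · rintro w ⟨ι, inst, T, hT, D, rfl⟩
      obtain ⟨t, ht⟩ := @BK.bag_lower_bound n k hk hn ι inst T hT D h
      have h2 : Nat.choose n k ≤ (@Finset.univ ι inst).sup fun i => (D.bag i).card :=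
        le_trans ht (Finset.le_sup (s := @Finset.univ ι inst)
          (f := fun i => (D.bag i).card) (@Finset.mem_univ ι inst t))
      exact Nat.sub_le_sub_right h2 1
end

section
/- For all positive integers t and n, the pathwidth of the generalized hypercube equals its bandwidth: pw(H(t,2,n)) = bw(H(t,2,n)). -/
open Finset

set_option linter.unusedSectionVars false

section Rank
variable {α : Type*} [Fintype α] [DecidableEq α] (r : α → α → Prop) [DecidableRel r]

def rk (x : α) : ℕ := (univ.filter (fun y => r y x)).card

variable (htr : ∀ {a b c}, r a b → r b c → r a c)
  (hirr : ∀ {a}, ¬ r a a)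
  (htot : ∀ {a b}, a ≠ b → r a b ∨ r b a)
include htr hirr

theorem rk_lt_rk {x y : α} (h : r x y) : rk r x < rk r y := by
  apply Finset.card_lt_card
  constructor
  · intro a ha; simp only [mem_filter, mem_univ, true_and] at *; exact htr ha h
  · intro hsub
    have := hsub (by simp [h] : x ∈ univ.filter (fun z => r z y))
    simp only [mem_filter] at this
    exact hirr this.2

include htot

theorem rk_inj {x y : α} (h : rk r x = rk r y) : x = y := by
  by_contra hne
  rcases htot hne with h1 | h1
  · exact absurd h (Nat.ne_of_lt (rk_lt_rk r htr hirr h1))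
  · exact absurd h.symm (Nat.ne_of_lt (rk_lt_rk r htr hirr h1))

theorem lt_of_rk_lt {x y : α} (h : rk r x < rk r y) : r x y := by
  rcases eq_or_ne x y with rfl | hne
  · omega
  rcases htot hne with h1 | h1
  · exact h1
  · exact absurd (rk_lt_rk r htr hirr h1) (by omega)

omit htot
theorem rk_lt_card (x : α) : rk r x < Fintype.card α := by
  have hs : univ.filter (fun y => r y x) ⊆ univ.erase x := by
    intro a ha; simp only [mem_filter, mem_univ, true_and] at ha
    exact Finset.mem_erase.2 ⟨fun h => hirr (h ▸ ha), mem_univ a⟩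
  calc rk r x ≤ (univ.erase x).card := Finset.card_le_card hs
    _ < _ := by rw [Finset.card_erase_of_mem (mem_univ x), Finset.card_univ]
                have : 0 < Fintype.card α := Fintype.card_pos_iff.2 ⟨x⟩
                omega

include htot
theorem rk_image : univ.image (rk r) = Finset.range (Fintype.card α) := by
  apply Finset.eq_of_subset_of_card_le
  · intro a ha; simp only [mem_image, mem_univ, true_and] at ha
    obtain ⟨x, rfl⟩ := ha
    exact Finset.mem_range.2 (rk_lt_card r htr hirr x)
  · rw [Finset.card_range, Finset.card_image_of_injective _
      (fun x y h => rk_inj r htr hirr htot h), Finset.card_univ]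

theorem rk_surj {k : ℕ} (hk : k < Fintype.card α) : ∃ x, rk r x = k := by
  have : k ∈ univ.image (rk r) := by
    rw [rk_image r htr hirr htot]; exact Finset.mem_range.2 hk
  simpa using this

theorem card_rk_lt (k : ℕ) :
    (univ.filter (fun x => rk r x < k)).card = min k (Fintype.card α) := by
  rw [← Finset.card_image_of_injective (univ.filter (fun x => rk r x < k))
      (fun x y h => rk_inj r htr hirr htot h)]
  have h2 : (univ.filter (fun x => rk r x < k)).image (rk r)
      = (univ.image (rk r)).filter (fun m => m < k) := by
    ext a
    simp only [mem_image, mem_filter, mem_univ, true_and]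
    constructor
    · rintro ⟨x, ⟨hx, rfl⟩⟩; exact ⟨⟨x, rfl⟩, hx⟩
    · rintro ⟨⟨x, rfl⟩, h⟩; exact ⟨x, h, rfl⟩
  rw [h2, rk_image r htr hirr htot]
  have h3 : (Finset.range (Fintype.card α)).filter (fun m => m < k)
      = Finset.range (min k (Fintype.card α)) := by
    ext a; simp only [mem_filter, Finset.mem_range]; omega
  rw [h3, Finset.card_range]
end Rank



/-- The generalized Hamming graph `H(t,q,n)`: vertices are `n`-tuples over an alphabet of
size `q`, two tuples adjacent iff they are distinct with Hamming distance at most `t`. -/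
def genHamming (t q n : ℕ) : SimpleGraph (Fin n → Fin q) where
  Adj x y := x ≠ y ∧ hammingDist x y ≤ t
  symm := ⟨by
    rintro x y ⟨h1, h2⟩
    exact ⟨h1.symm, by rwa [hammingDist_comm]⟩⟩
  loopless := ⟨by rintro x ⟨h, -⟩; exact h rfl⟩

namespace HyperPf

abbrev Q (n : ℕ) := Fin n → Fin 2

variable {n : ℕ}

/-- Hamming weight. -/
def wt (x : Q n) : ℕ := ∑ i, (x i : ℕ)

/-- strict lex (first difference; a `1` earlier means smaller). -/
def sdlt (x y : Q n) : Prop := ∃ i, (∀ j, j < i → x j = y j) ∧ x i = 1 ∧ y i = 0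

/-- the simplicial order: by weight, then lex. -/
def slt (x y : Q n) : Prop := wt x < wt y ∨ (wt x = wt y ∧ sdlt x y)

instance : DecidableRel (sdlt (n := n)) := fun _ _ => by unfold sdlt; infer_instance
instance : DecidableRel (slt (n := n)) := fun _ _ => by unfold slt; infer_instance

lemma fin2 (a : Fin 2) : a = 0 ∨ a = 1 := by
  rcases a with ⟨a, ha⟩
  interval_cases a
  · exact Or.inl rfl
  · exact Or.inr rfl

lemma fin2_ne {a b : Fin 2} (h : a ≠ b) (h1 : a = 1) : b = 0 := by
  rcases fin2 b with hb | hb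
  · exact hb
  · exact absurd (h1.trans hb.symm) h

lemma fin2_val0 {a : Fin 2} (h : (a : ℕ) = 0) : a = 0 := by
  rcases fin2 a with h' | h'
  · exact h'
  · rw [h'] at h; simp at h

lemma sdlt_irrefl (x : Q n) : ¬ sdlt x x := by
  rintro ⟨i, _, h1, h0⟩
  rw [h1] at h0; exact absurd h0 (by decide)

lemma sdlt_trans {x y z : Q n} (h1 : sdlt x y) (h2 : sdlt y z) : sdlt x z := by
  obtain ⟨i, hagr, hxi, hyi⟩ := h1
  obtain ⟨i', hagr', hyi', hzi'⟩ := h2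
  rcases lt_trichotomy i i' with h | h | h
  · exact ⟨i, fun j hj => (hagr j hj).trans (hagr' j (hj.trans h)), hxi,
      (hagr' i h) ▸ hyi⟩
  · subst h; rw [hyi'] at hyi; exact absurd hyi (by decide)
  · exact ⟨i', fun j hj => (hagr j (hj.trans h)).trans (hagr' j hj),
      (hagr i' h).trans hyi', hzi'⟩

lemma sdlt_total {x y : Q n} (hne : x ≠ y) : sdlt x y ∨ sdlt y x := by
  have hD : (univ.filter (fun j => x j ≠ y j)).Nonempty := by
    by_contra h
    rw [Finset.not_nonempty_iff_eq_empty, Finset.filter_eq_empty_iff] at h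
    exact hne (funext fun j => not_not.mp (h (mem_univ j)))
  set i0 := (univ.filter (fun j => x j ≠ y j)).min' hD with hi0
  have hmem : x i0 ≠ y i0 := by
    have := Finset.min'_mem _ hD
    rw [← hi0] at this; exact (Finset.mem_filter.mp this).2
  have hagr : ∀ j, j < i0 → x j = y j := by
    intro j hj
    by_contra hne'
    exact absurd hj (not_lt.mpr (Finset.min'_le _ j (Finset.mem_filter.mpr ⟨mem_univ j, hne'⟩)))
  rcases fin2 (x i0) with hx | hx
  · have hy : y i0 = 1 := by
      rcases fin2 (y i0) with hy | hy
      · exact absurd (hx.trans hy.symm) hmem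
      · exact hy
    exact Or.inr ⟨i0, fun j hj => (hagr j hj).symm, hy, hx⟩
  · exact Or.inl ⟨i0, hagr, hx, fin2_ne hmem hx⟩

lemma slt_irrefl (x : Q n) : ¬ slt x x := by
  rintro (h | ⟨_, h⟩)
  · omega
  · exact sdlt_irrefl x h

lemma slt_trans {x y z : Q n} (h1 : slt x y) (h2 : slt y z) : slt x z := by
  rcases h1 with h1 | ⟨e1, d1⟩ <;> rcases h2 with h2 | ⟨e2, d2⟩
  · exact Or.inl (h1.trans h2)
  · exact Or.inl (e2 ▸ h1)
  · exact Or.inl (e1 ▸ h2)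
  · exact Or.inr ⟨e1.trans e2, sdlt_trans d1 d2⟩

lemma slt_total {x y : Q n} (hne : x ≠ y) : slt x y ∨ slt y x := by
  rcases lt_trichotomy (wt x) (wt y) with h | h | h
  · exact Or.inl (Or.inl h)
  · rcases sdlt_total hne with hd | hd
    · exact Or.inl (Or.inr ⟨h, hd⟩)
    · exact Or.inr (Or.inr ⟨h.symm, hd⟩)
  · exact Or.inr (Or.inl h)

lemma slt_asymm {x y : Q n} (h1 : slt x y) (h2 : slt y x) : False :=
  slt_irrefl x (slt_trans h1 h2)

lemma slt_wt {x y : Q n} (h : slt x y) : wt x ≤ wt y := by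
  rcases h with h | ⟨h, _⟩ <;> omega

lemma wt_slt {x y : Q n} (h : wt x < wt y) : slt x y := Or.inl h

lemma not_slt_iff {x y : Q n} : ¬ slt x y ↔ (x = y ∨ slt y x) := by
  constructor
  · intro h
    rcases eq_or_ne x y with rfl | hne
    · exact Or.inl rfl
    · rcases slt_total hne with h1 | h1
      · exact absurd h1 h
      · exact Or.inr h1
  · rintro (rfl | h)
    · exact slt_irrefl x
    · exact fun h' => slt_asymm h' h


/-! ### update / weight / hamming distance lemmas -/

lemma wt_split (i0 : Fin n) (v : Q n) :
    wt v = (∑ m ∈ univ.filter (fun m => m < i0), (v m : ℕ)) + (v i0 : ℕ)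
      + (∑ m ∈ univ.filter (fun m => i0 < m), (v m : ℕ)) := by
  have d1 : Disjoint (univ.filter (fun m : Fin n => m < i0)) (univ.filter (fun m => i0 < m)) := by
    rw [Finset.disjoint_left]
    intro a ha hb
    simp only [mem_filter, mem_univ, true_and] at ha hb
    exact absurd (ha.trans hb) (lt_irrefl a)
  have d2 : Disjoint (univ.filter (fun m : Fin n => m < i0) ∪ univ.filter (fun m => i0 < m))
      ({i0} : Finset (Fin n)) := by
    rw [Finset.disjoint_right]
    intro a ha hb
    rw [Finset.mem_singleton] at ha
    subst ha
    rcases Finset.mem_union.mp hb with h | h <;>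
      exact absurd (Finset.mem_filter.mp h).2 (lt_irrefl a)
  have h1 : (univ : Finset (Fin n)) = (univ.filter (fun m => m < i0) ∪
      univ.filter (fun m => i0 < m)) ∪ {i0} := by
    ext a
    simp only [mem_univ, mem_union, mem_filter, mem_singleton, true_and, true_iff]
    rcases lt_trichotomy a i0 with h | h | h
    · exact Or.inl (Or.inl h)
    · exact Or.inr h
    · exact Or.inl (Or.inr h)
  rw [wt]
  nth_rewrite 1 [h1]
  rw [Finset.sum_union d2, Finset.sum_union d1, Finset.sum_singleton]
  ring

lemma wt_update (x : Q n) (i : Fin n) (a : Fin 2) :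
    wt (Function.update x i a) = wt x - (x i : ℕ) + (a : ℕ) := by
  have h0 := wt_split i x
  have h1 := wt_split i (Function.update x i a)
  have e1 : ∀ m ∈ univ.filter (fun m => m < i), ((Function.update x i a) m : ℕ) = (x m : ℕ) := by
    intro m hm; simp only [mem_filter] at hm
    rw [Function.update_of_ne (ne_of_lt hm.2)]
  have e2 : ∀ m ∈ univ.filter (fun m => i < m), ((Function.update x i a) m : ℕ) = (x m : ℕ) := by
    intro m hm; simp only [mem_filter] at hm
    rw [Function.update_of_ne (ne_of_gt hm.2)]
  rw [Finset.sum_congr rfl e1, Finset.sum_congr rfl e2, Function.update_self] at h1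
  omega

lemma hammingDist_card (x y : Q n) :
    hammingDist x y = (univ.filter (fun i => x i ≠ y i)).card := rfl

lemma dist_update (x : Q n) (i : Fin n) (a : Fin 2) :
    hammingDist x (Function.update x i a) ≤ 1 := by
  rw [hammingDist_card]
  have : (univ.filter (fun j => x j ≠ Function.update x i a j)) ⊆ {i} := by
    intro j hj
    simp only [mem_filter, mem_univ, true_and] at hj
    rcases eq_or_ne j i with rfl | hne
    · exact mem_singleton_self j
    · rw [Function.update_of_ne hne] at hj; exact absurd rfl hj
  calc _ ≤ ({i} : Finset (Fin n)).card := Finset.card_le_card this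
    _ = 1 := Finset.card_singleton i

lemma dist_one_exists {x y : Q n} (h : hammingDist x y ≤ 1) (hne : x ≠ y) :
    ∃ i, y = Function.update x i (y i) ∧ y i ≠ x i := by
  have h1 : hammingDist x y ≠ 0 := fun h0 => hne (hammingDist_eq_zero.mp h0)
  have h2 : hammingDist x y = 1 := by omega
  rw [hammingDist_card] at h2
  obtain ⟨i, hi⟩ := Finset.card_eq_one.mp h2
  have hmem : ∀ j, x j ≠ y j ↔ j = i := by
    intro j
    constructor
    · intro hj
      have : j ∈ univ.filter (fun m => x m ≠ y m) := Finset.mem_filter.mpr ⟨mem_univ j, hj⟩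
      rw [hi] at this; exact Finset.mem_singleton.mp this
    · intro hji
      rw [hji]
      have h7 : i ∈ univ.filter (fun m => x m ≠ y m) := by rw [hi]; exact mem_singleton_self i
      exact (Finset.mem_filter.mp h7).2
  refine ⟨i, funext fun j => ?_, ?_⟩
  · rcases eq_or_ne j i with rfl | hne'
    · rw [Function.update_self]
    · rw [Function.update_of_ne hne']
      by_contra hne''
      exact hne' ((hmem j).mp (Ne.symm hne''))
  · intro hxy
    have : x i ≠ y i := (hmem i).mpr rfl
    exact this hxy.symm

/-! ### The key lex lemma (L1) -/

lemma lexStep {x z : Q n} {j : Fin n} (hxj : x j = 0) (hwz : wt z = wt x + 1)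
    (h : z = Function.update x j 1 ∨ sdlt z (Function.update x j 1)) :
    ∃ i, z i = 1 ∧ (Function.update z i 0 = x ∨ sdlt (Function.update z i 0) x) := by
  set y := Function.update x j 1 with hy
  rcases h with rfl | hsd
  · refine ⟨j, Function.update_self j 1 x, Or.inl ?_⟩
    rw [hy]
    funext m
    rcases eq_or_ne m j with rfl | hne
    · rw [Function.update_self, hxj]
    · rw [Function.update_of_ne hne, Function.update_of_ne hne]
  · obtain ⟨i0, hagr, hz0, hy0⟩ := hsd
    have hij : i0 ≠ j := fun h => by
      rw [h, hy, Function.update_self] at hy0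
      exact absurd hy0 (by decide)
    rcases lt_or_gt_of_ne hij with hlt | hgt
    · -- i0 < j ; либо exists m > i0 with z m = 1, либо update z i0 0 = x
      by_cases hm : ∃ m, i0 < m ∧ z m = 1
      · obtain ⟨m, hm1, hm2⟩ := hm
        refine ⟨m, hm2, Or.inr ⟨i0, ?_, ?_, ?_⟩⟩
        · intro j' hj'
          rw [Function.update_of_ne (by intro h; rw [h] at hj'; exact absurd (hj'.trans hm1) (lt_irrefl _))]
          have := hagr j' hj'
          rw [hy, Function.update_of_ne (by intro h; rw [h] at hj'; exact absurd (hj'.trans hlt) (lt_irrefl _))] at this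
          exact this
        · rw [Function.update_of_ne (ne_of_lt hm1)]; exact hz0
        · rw [hy, Function.update_of_ne hij] at hy0; exact hy0
      · push_neg at hm
        refine ⟨i0, hz0, Or.inl (funext fun m => ?_)⟩
        rcases lt_trichotomy m i0 with hmi | rfl | hmi
        · rw [Function.update_of_ne (ne_of_lt hmi)]
          have := hagr m hmi
          rw [hy, Function.update_of_ne (by intro h; rw [h] at hmi; exact absurd (hmi.trans hlt) (lt_irrefl _))] at this
          exact this
        · rw [Function.update_self]
          rw [hy, Function.update_of_ne hij] at hy0
          exact hy0.symm
        · -- m > i0 : z m = 0 and need x m = 0 by weight counting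
          rw [Function.update_of_ne (ne_of_gt hmi)]
          have hzm : z m = 0 := by
            rcases fin2 (z m) with h' | h'
            · exact h'
            · exact absurd h' (hm m hmi)
          rw [hzm]
          -- weight counting
          have hsz := wt_split i0 z
          have hsx := wt_split i0 x
          have e1 : ∀ m' ∈ univ.filter (fun m' => m' < i0), ((z m' : ℕ)) = (x m' : ℕ) := by
            intro m' hm'; simp only [mem_filter] at hm'
            have := hagr m' hm'.2
            rw [hy, Function.update_of_ne (by intro h; rw [h] at hm'; exact absurd (hm'.2.trans hlt) (lt_irrefl _))] at this
            rw [this]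
          have e2 : ∀ m' ∈ univ.filter (fun m' => i0 < m'), ((z m' : ℕ)) = 0 := by
            intro m' hm'; simp only [mem_filter] at hm'
            rcases fin2 (z m') with h' | h'
            · rw [h']; rfl
            · exact absurd h' (hm m' hm'.2)
          rw [Finset.sum_congr rfl e1, Finset.sum_congr rfl e2, Finset.sum_const_zero] at hsz
          have hx0 : x i0 = 0 := by
            rw [hy, Function.update_of_ne hij] at hy0; exact hy0
          rw [hz0, hx0] at *
          have hsum0 : (∑ m' ∈ univ.filter (fun m' => i0 < m'), (x m' : ℕ)) = 0 := by omega
          have h5 := Finset.sum_eq_zero_iff.mp hsum0 m (Finset.mem_filter.mpr ⟨mem_univ m, hmi⟩)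
          rw [fin2_val0 h5]
    · -- j < i0 : take i := j
      have hzj : z j = 1 := by
        have := hagr j hgt
        rw [hy, Function.update_self] at this
        exact this
      refine ⟨j, hzj, Or.inr ⟨i0, ?_, ?_, ?_⟩⟩
      · intro j' hj'
        rcases eq_or_ne j' j with rfl | hne
        · rw [Function.update_self, hxj]
        · rw [Function.update_of_ne hne]
          have := hagr j' hj'
          rw [hy, Function.update_of_ne hne] at this
          exact this
      · rw [Function.update_of_ne hij]
        exact hz0
      · rw [hy, Function.update_of_ne hij] at hy0
        exact hy0

/-! ### Star lemma (L2) and neighbourhoods -/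

/-- `sle` convenience -/
def sle (x y : Q n) : Prop := x = y ∨ slt x y

lemma star {x y z : Q n} (hd : hammingDist x y ≤ 1) (hz : sle z y) :
    ∃ w, sle w x ∧ hammingDist w z ≤ 1 := by
  by_cases hzx : sle z x
  · refine ⟨z, hzx, ?_⟩
    rw [hammingDist_self z]
    omega
  have hne : x ≠ z := fun h => hzx (Or.inl h.symm)
  have hxz : slt x z := by
    rcases slt_total hne with h | h
    · exact h
    · exact absurd (Or.inr h) hzx
  have hzy : sle z y := hz
  have hxy : slt x y := by
    rcases hzy with rfl | h
    · exact hxz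
    · exact slt_trans hxz h
  have hnexy : x ≠ y := fun h => slt_irrefl x (h ▸ hxy)
  obtain ⟨j, hyu, hc⟩ := dist_one_exists hd hnexy
  rcases fin2 (x j) with hxj | hxj
  · -- y = update x j 1, weight goes up
    have hyj : y j = 1 := by
      rcases fin2 (y j) with h' | h'
      · exact absurd (h'.trans hxj.symm) hc
      · exact h'
    have hwy : wt y = wt x + 1 := by
      rw [hyu, wt_update, hxj, hyj]; simp
    have hwxz : wt x ≤ wt z := slt_wt hxz
    have hwzy : wt z ≤ wt y := by
      rcases hzy with rfl | h
      · rfl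
      · exact slt_wt h
    rcases Nat.eq_or_lt_of_le hwxz with hcase | hcase
    · -- wt z = wt x : drop any 1 of z
      have hz1 : ∃ m, z m = 1 := by
        by_contra hno
        push_neg at hno
        have : wt z = 0 := by
          apply Finset.sum_eq_zero
          intro m _
          rcases fin2 (z m) with h' | h'
          · rw [h']; rfl
          · exact absurd h' (hno m)
        have hwx0 : wt x = 0 := by omega
        have : x = z := by
          funext m
          have h1 : (x m : ℕ) = 0 :=
            Finset.sum_eq_zero_iff.mp hwx0 m (mem_univ m)
          have h2 : (z m : ℕ) = 0 :=
            Finset.sum_eq_zero_iff.mp ‹wt z = 0› m (mem_univ m)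
          rw [fin2_val0 h1, fin2_val0 h2]
        exact hne this
      obtain ⟨m, hm⟩ := hz1
      refine ⟨Function.update z m 0, Or.inr (wt_slt ?_), ?_⟩
      · have hz1le : (1:ℕ) ≤ wt z := by
          calc (1:ℕ) = (z m : ℕ) := by rw [hm]; rfl
            _ ≤ _ := Finset.single_le_sum (f := fun m' => ((z m' : ℕ)))
                (fun m' _ => Nat.zero_le _) (mem_univ m)
        rw [wt_update, hm]
        simp only [Fin.val_one, Fin.val_zero]
        omega
      · rw [hammingDist_comm]; exact dist_update z m 0
    · -- wt z = wt y = wt x + 1 : lexStep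
      have hwz : wt z = wt x + 1 := by omega
      have hsd : z = Function.update x j 1 ∨ sdlt z (Function.update x j 1) := by
        have hy1 : y = Function.update x j 1 := by rw [hyu, hyj]
        rcases hzy with rfl | h
        · exact Or.inl hy1
        · rcases h with h | ⟨_, h⟩
          · omega
          · exact Or.inr (hy1 ▸ h)
      obtain ⟨i, hzi, hle⟩ := lexStep hxj hwz hsd
      refine ⟨Function.update z i 0, ?_, ?_⟩
      · rcases hle with h | h
        · exact Or.inl h
        · refine Or.inr (Or.inr ⟨?_, h⟩)
          rw [wt_update, hzi]
          simp only [Fin.val_one, Fin.val_zero]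
          omega
      · rw [hammingDist_comm]; exact dist_update z i 0
  · -- x j = 1, y = update x j 0 : weight goes down, contradiction
    have hyj : y j = 0 := fin2_ne (Ne.symm hc) hxj
    have hwy : wt y + 1 = wt x := by
      rw [hyu, wt_update, hxj, hyj]
      simp only [Fin.val_one, Fin.val_zero]
      have : (1:ℕ) ≤ wt x := by
        rw [wt]
        calc (1:ℕ) = (x j : ℕ) := by rw [hxj]; rfl
          _ ≤ _ := Finset.single_le_sum (f := fun m' => ((x m' : ℕ)))
              (fun m' _ => Nat.zero_le _) (mem_univ j)
      omega
    exact absurd hxy (fun h => by have := slt_wt h; omega)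


/-! ### neighbourhood, prefixes, phi -/

def nbhd (S : Finset (Q n)) : Finset (Q n) :=
  univ.filter (fun z => ∃ x ∈ S, hammingDist x z ≤ 1)

lemma subset_nbhd (S : Finset (Q n)) : S ⊆ nbhd S := by
  intro x hx
  exact Finset.mem_filter.mpr ⟨mem_univ x, x, hx, by rw [hammingDist_self x]; omega⟩

lemma nbhd_mono {S T : Finset (Q n)} (h : S ⊆ T) : nbhd S ⊆ nbhd T := by
  intro z hz
  obtain ⟨x, hx, hd⟩ := (Finset.mem_filter.mp hz).2
  exact Finset.mem_filter.mpr ⟨mem_univ z, x, h hx, hd⟩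

/-- downward closed w.r.t. the simplicial order -/
def DC (P : Finset (Q n)) : Prop := ∀ z y, slt z y → y ∈ P → z ∈ P

lemma DC_nbhd {P : Finset (Q n)} (h : DC P) : DC (nbhd P) := by
  intro z y hzy hy
  obtain ⟨x, hx, hd⟩ := (Finset.mem_filter.mp hy).2
  obtain ⟨w, hw, hwd⟩ := star hd (Or.inr hzy)
  refine Finset.mem_filter.mpr ⟨mem_univ z, w, ?_, hwd⟩
  rcases hw with rfl | hw
  · exact hx
  · exact h w x hw hx

noncomputable def srk (x : Q n) : ℕ := rk slt x

lemma srk_lt_srk {x y : Q n} (h : slt x y) : srk x < srk y :=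
  rk_lt_rk slt (fun h1 h2 => slt_trans h1 h2) (fun h => slt_irrefl _ h) h

lemma slt_of_srk_lt {x y : Q n} (h : srk x < srk y) : slt x y :=
  lt_of_rk_lt slt (fun h1 h2 => slt_trans h1 h2) (fun h => slt_irrefl _ h)
    (fun h => slt_total h) h

lemma srk_inj {x y : Q n} (h : srk x = srk y) : x = y :=
  rk_inj slt (fun h1 h2 => slt_trans h1 h2) (fun h => slt_irrefl _ h)
    (fun h => slt_total h) h

lemma srk_lt_card (x : Q n) : srk x < Fintype.card (Q n) :=
  rk_lt_card slt (fun h1 h2 => slt_trans h1 h2) (fun h => slt_irrefl _ h) x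

lemma srk_surj {k : ℕ} (hk : k < Fintype.card (Q n)) : ∃ x : Q n, srk x = k :=
  rk_surj slt (fun h1 h2 => slt_trans h1 h2) (fun h => slt_irrefl _ h)
    (fun h => slt_total h) hk

noncomputable def prefixK (n : ℕ) (k : ℕ) : Finset (Q n) :=
  univ.filter (fun x => srk x < k)

lemma card_prefixK (k : ℕ) : (prefixK n k).card = min k (Fintype.card (Q n)) := by
  classical
  rw [prefixK]
  rw [show (univ.filter (fun x : Q n => srk x < k)) = (univ.filter (fun x : Q n => rk slt x < k)) from rfl]
  exact card_rk_lt slt (fun h1 h2 => slt_trans h1 h2) (fun h => slt_irrefl _ h)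
    (fun h => slt_total h) k

lemma DC_prefixK (k : ℕ) : DC (prefixK n k) := by
  intro z y hzy hy
  have := (Finset.mem_filter.mp hy).2
  exact Finset.mem_filter.mpr ⟨mem_univ z, (srk_lt_srk hzy).trans this⟩

lemma DC_eq_prefixK {P : Finset (Q n)} (h : DC P) : P = prefixK n P.card := by
  have hsub : P ⊆ prefixK n P.card := by
    intro x hx
    refine Finset.mem_filter.mpr ⟨mem_univ x, ?_⟩
    have h1 : univ.filter (fun y => slt y x) ⊆ P.erase x := by
      intro a ha
      simp only [mem_filter, mem_univ, true_and] at ha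
      exact Finset.mem_erase.mpr ⟨fun he => slt_irrefl x (he ▸ ha), h a x ha hx⟩
    calc srk x = (univ.filter (fun y => slt y x)).card := rfl
      _ ≤ (P.erase x).card := Finset.card_le_card h1
      _ < P.card := by
          rw [Finset.card_erase_of_mem hx]
          have : 1 ≤ P.card := Finset.card_pos.mpr ⟨x, hx⟩
          omega
  apply Finset.eq_of_subset_of_card_le hsub
  rw [card_prefixK]
  exact le_trans (min_le_left _ _) (le_refl _)

noncomputable def phi (n : ℕ) (k : ℕ) : ℕ := (nbhd (prefixK n k)).card

lemma nbhd_prefixK (k : ℕ) : nbhd (prefixK n k) = prefixK n (phi n k) := by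
  have h := DC_eq_prefixK (DC_nbhd (DC_prefixK (n := n) k))
  rw [← phi] at h
  exact h

lemma phi_mono {k k' : ℕ} (h : k ≤ k') : phi n k ≤ phi n k' := by
  apply Finset.card_le_card
  apply nbhd_mono
  intro x hx
  exact Finset.mem_filter.mpr ⟨mem_univ x, lt_of_lt_of_le (Finset.mem_filter.mp hx).2 h⟩

lemma le_phi (k : ℕ) : min k (Fintype.card (Q n)) ≤ phi n k := by
  rw [← card_prefixK]
  exact Finset.card_le_card (subset_nbhd _)

lemma phi_le_card (k : ℕ) : phi n k ≤ Fintype.card (Q n) := by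
  rw [phi, ← Finset.card_univ]
  exact Finset.card_le_card (Finset.filter_subset _ _)

/-- Harper for sets that are already prefixes / downward closed is trivial -/
lemma harper_of_DC {S : Finset (Q n)} (h : DC S) : phi n S.card ≤ (nbhd S).card := by
  rw [DC_eq_prefixK h]
  rw [← DC_eq_prefixK h]
  exact le_of_eq (by rw [phi, ← DC_eq_prefixK h])


/-! ### sections and compression (dimension m+1) -/
section Compression
variable {m : ℕ}

lemma sum_univ_succAbove' (p : Fin (m+1)) (f : Fin (m+1) → ℕ) :
    ∑ i, f i = f p + ∑ j, f (p.succAbove j) :=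
  Fin.sum_univ_succAbove f p

lemma wt_insertNth (p : Fin (m+1)) (a : Fin 2) (x' : Q m) :
    wt (p.insertNth a x') = (a : ℕ) + wt x' := by
  have h := sum_univ_succAbove' p (fun i => ((p.insertNth a x' : Q (m+1)) i : ℕ))
  rw [wt, h, Fin.insertNth_apply_same, wt]
  congr 1
  apply Finset.sum_congr rfl
  intro j _
  rw [Fin.insertNth_apply_succAbove]

lemma sdlt_insertNth {p : Fin (m+1)} {a : Fin 2} {x' y' : Q m} :
    sdlt (p.insertNth a x') (p.insertNth a y') ↔ sdlt x' y' := by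
  constructor
  · rintro ⟨i, hagr, h1, h0⟩
    have hip : i ≠ p := by
      intro h
      rw [h, Fin.insertNth_apply_same] at h1 h0
      rw [h1] at h0
      exact absurd h0 (by decide)
    obtain ⟨i', rfl⟩ := Fin.exists_succAbove_eq hip
    refine ⟨i', fun j' hj' => ?_, ?_, ?_⟩
    · have := hagr (p.succAbove j') ((Fin.strictMono_succAbove p) hj')
      rwa [Fin.insertNth_apply_succAbove, Fin.insertNth_apply_succAbove] at this
    · rwa [Fin.insertNth_apply_succAbove] at h1
    · rwa [Fin.insertNth_apply_succAbove] at h0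
  · rintro ⟨i', hagr, h1, h0⟩
    refine ⟨p.succAbove i', fun j hj => ?_, ?_, ?_⟩
    · rcases eq_or_ne j p with rfl | hjp
      · rw [Fin.insertNth_apply_same, Fin.insertNth_apply_same]
      · obtain ⟨j', rfl⟩ := Fin.exists_succAbove_eq hjp
        rw [Fin.insertNth_apply_succAbove, Fin.insertNth_apply_succAbove]
        exact hagr j' ((Fin.strictMono_succAbove p).lt_iff_lt.mp hj)
    · rw [Fin.insertNth_apply_succAbove]; exact h1
    · rw [Fin.insertNth_apply_succAbove]; exact h0

lemma slt_insertNth {p : Fin (m+1)} {a : Fin 2} {x' y' : Q m} :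
    slt (p.insertNth a x') (p.insertNth a y') ↔ slt x' y' := by
  rw [slt, slt, wt_insertNth, wt_insertNth, sdlt_insertNth]
  constructor
  · rintro (h | ⟨e, d⟩)
    · exact Or.inl (by omega)
    · exact Or.inr ⟨by omega, d⟩
  · rintro (h | ⟨e, d⟩)
    · exact Or.inl (by omega)
    · exact Or.inr ⟨by omega, d⟩

lemma slt_section {p : Fin (m+1)} {x y : Q (m+1)} (h : x p = y p) :
    slt x y ↔ slt (p.removeNth x) (p.removeNth y) := by
  conv_lhs => rw [← Fin.insertNth_self_removeNth p x, ← Fin.insertNth_self_removeNth p y, h]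
  exact slt_insertNth

lemma hammingDist_insertNth (p : Fin (m+1)) (a b : Fin 2) (x' y' : Q m) :
    hammingDist (p.insertNth a x' : Q (m+1)) (p.insertNth b y')
      = (if a = b then 0 else 1) + hammingDist x' y' := by
  have hc1 := Finset.card_filter
    (fun i => (p.insertNth a x' : Q (m+1)) i ≠ (p.insertNth b y' : Q (m+1)) i) univ
  have hc2 := Finset.card_filter (fun i => x' i ≠ y' i) univ
  rw [hammingDist_card, hammingDist_card, hc1, hc2]
  have h := sum_univ_succAbove' p
    (fun i => if (p.insertNth a x' : Q (m+1)) i ≠ (p.insertNth b y' : Q (m+1)) i then 1 else 0)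
  rw [h, Fin.insertNth_apply_same, Fin.insertNth_apply_same]
  congr 1
  · by_cases hab : a = b <;> simp [hab]
  · apply Finset.sum_congr rfl
    intro j _
    rw [Fin.insertNth_apply_succAbove, Fin.insertNth_apply_succAbove]

/-- the ε-section of a set -/
noncomputable def sec (p : Fin (m+1)) (ε : Fin 2) (S : Finset (Q (m+1))) : Finset (Q m) :=
  univ.filter (fun x' => p.insertNth ε x' ∈ S)

lemma mem_sec {p : Fin (m+1)} {ε : Fin 2} {S : Finset (Q (m+1))} {x' : Q m} :
    x' ∈ sec p ε S ↔ p.insertNth ε x' ∈ S := by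
  rw [sec, Finset.mem_filter]
  exact ⟨fun h => h.2, fun h => ⟨mem_univ _, h⟩⟩

lemma sum_sec_aux (p : Fin (m+1)) (ε : Fin 2) (S : Finset (Q (m+1))) (g : Q (m+1) → ℕ) :
    ∑ x' ∈ sec p ε S, g (p.insertNth ε x') = ∑ x ∈ S.filter (fun x => x p = ε), g x := by
  apply Finset.sum_bij' (fun (x' : Q m) (_ : x' ∈ sec p ε S) => (p.insertNth ε x' : Q (m+1)))
    (fun (x : Q (m+1)) (_ : x ∈ S.filter (fun x => x p = ε)) => p.removeNth x)
  · intro x' h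
    rw [mem_sec] at h
    exact Finset.mem_filter.mpr ⟨h, by rw [Fin.insertNth_apply_same]⟩
  · intro x hx
    obtain ⟨hxS, hxp⟩ := Finset.mem_filter.mp hx
    rw [mem_sec, ← hxp, Fin.insertNth_self_removeNth]
    exact hxS
  · intro x' _
    rw [Fin.removeNth_insertNth]
  · intro x hx
    obtain ⟨hxS, hxp⟩ := Finset.mem_filter.mp hx
    rw [← hxp, Fin.insertNth_self_removeNth]
  · intro x' _
    rfl

lemma filter_ne_zero (p : Fin (m+1)) (S : Finset (Q (m+1))) :
    S.filter (fun x => ¬ x p = 0) = S.filter (fun x => x p = 1) := by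
  apply Finset.filter_congr
  intro x _
  constructor
  · intro h
    rcases fin2 (x p) with h' | h'
    · exact absurd h' h
    · exact h'
  · intro h h0
    rw [h] at h0
    exact absurd h0 (by decide)

lemma sum_sec (p : Fin (m+1)) (S : Finset (Q (m+1))) (g : Q (m+1) → ℕ) :
    ∑ x ∈ S, g x = (∑ x' ∈ sec p 0 S, g (p.insertNth 0 x'))
      + (∑ x' ∈ sec p 1 S, g (p.insertNth 1 x')) := by
  rw [sum_sec_aux, sum_sec_aux, ← filter_ne_zero,
    Finset.sum_filter_add_sum_filter_not S (fun x => x p = 0) g]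

lemma card_sec_sum (p : Fin (m+1)) (S : Finset (Q (m+1))) :
    S.card = (sec p 0 S).card + (sec p 1 S).card := by
  have h := sum_sec p S (fun _ => 1)
  simpa using h


lemma fin2_eq_of_ne {a b c : Fin 2} (hab : a ≠ b) (hcb : c ≠ b) : a = c := by
  rcases fin2 a with h1 | h1 <;> rcases fin2 b with h2 | h2 <;> rcases fin2 c with h3 | h3 <;>
    first
      | (exact h1.trans h3.symm)
      | (exact absurd (h1.trans h2.symm) hab)
      | (exact absurd (h3.trans h2.symm) hcb)

/-- compression of `S` in direction `p` -/
noncomputable def comp (p : Fin (m+1)) (S : Finset (Q (m+1))) : Finset (Q (m+1)) :=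
  ((prefixK m (sec p 0 S).card).image (fun x' => (p.insertNth 0 x' : Q (m+1)))) ∪
    ((prefixK m (sec p 1 S).card).image (fun x' => (p.insertNth 1 x' : Q (m+1))))

lemma mem_comp {p : Fin (m+1)} {S : Finset (Q (m+1))} {ε : Fin 2} {x' : Q m} :
    (p.insertNth ε x' : Q (m+1)) ∈ comp p S ↔ x' ∈ prefixK m ((sec p ε S).card) := by
  constructor
  · intro h
    rcases Finset.mem_union.mp h with h' | h'
    · obtain ⟨u', hu, he⟩ := Finset.mem_image.mp h'
      have hep : ε = 0 := by
        have := congrFun he p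
        rw [Fin.insertNth_apply_same, Fin.insertNth_apply_same] at this
        exact this.symm
      have hxu : u' = x' := by
        have := congrArg (p.removeNth) he
        rwa [Fin.removeNth_insertNth, Fin.removeNth_insertNth] at this
      rw [hep]; rw [← hxu]; exact hu
    · obtain ⟨u', hu, he⟩ := Finset.mem_image.mp h'
      have hep : ε = 1 := by
        have := congrFun he p
        rw [Fin.insertNth_apply_same, Fin.insertNth_apply_same] at this
        exact this.symm
      have hxu : u' = x' := by
        have := congrArg (p.removeNth) he
        rwa [Fin.removeNth_insertNth, Fin.removeNth_insertNth] at this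
      rw [hep]; rw [← hxu]; exact hu
  · intro h
    rcases fin2 ε with rfl | rfl
    · exact Finset.mem_union_left _ (Finset.mem_image.mpr ⟨x', h, rfl⟩)
    · exact Finset.mem_union_right _ (Finset.mem_image.mpr ⟨x', h, rfl⟩)

lemma sec_comp (p : Fin (m+1)) (S : Finset (Q (m+1))) (ε : Fin 2) :
    sec p ε (comp p S) = prefixK m ((sec p ε S).card) := by
  ext x'
  rw [mem_sec, mem_comp]

lemma card_sec_le (p : Fin (m+1)) (ε : Fin 2) (S : Finset (Q (m+1))) :
    (sec p ε S).card ≤ Fintype.card (Q m) := by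
  rw [← Finset.card_univ]
  exact Finset.card_le_card (Finset.filter_subset _ _)

lemma card_comp (p : Fin (m+1)) (S : Finset (Q (m+1))) : (comp p S).card = S.card := by
  rw [card_sec_sum p (comp p S), sec_comp, sec_comp, card_prefixK, card_prefixK,
    min_eq_left (card_sec_le p 0 S), min_eq_left (card_sec_le p 1 S),
    ← card_sec_sum p S]

lemma nbhd_sec_subset (p : Fin (m+1)) (ε : Fin 2) (S : Finset (Q (m+1))) :
    nbhd (sec p ε S) ⊆ sec p ε (nbhd S) := by
  intro z' hz
  obtain ⟨x', hx, hd⟩ := (Finset.mem_filter.mp hz).2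
  rw [mem_sec] at hx ⊢
  refine Finset.mem_filter.mpr ⟨mem_univ _, p.insertNth ε x', hx, ?_⟩
  rw [hammingDist_insertNth]
  simpa using hd

lemma sec_subset_nbhd (p : Fin (m+1)) (ε δ : Fin 2) (S : Finset (Q (m+1))) :
    sec p ε S ⊆ sec p δ (nbhd S) := by
  intro x' hx
  rw [mem_sec] at hx ⊢
  refine Finset.mem_filter.mpr ⟨mem_univ _, p.insertNth ε x', hx, ?_⟩
  rw [hammingDist_insertNth, hammingDist_self]
  by_cases h : ε = δ <;> simp [h]

lemma prefixK_union (k k' : ℕ) :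
    prefixK m k ∪ prefixK m k' = prefixK m (max k k') := by
  ext x
  simp only [prefixK, Finset.mem_union, Finset.mem_filter, mem_univ, true_and]
  omega

lemma sec_nbhd_comp {p : Fin (m+1)} {S : Finset (Q (m+1))} {ε δ : Fin 2} (hne : ε ≠ δ) :
    sec p ε (nbhd (comp p S))
      = prefixK m (max (phi m ((sec p ε S).card)) ((sec p δ S).card)) := by
  rw [← prefixK_union, ← nbhd_prefixK]
  apply Finset.Subset.antisymm
  · intro z' hz
    rw [mem_sec] at hz
    obtain ⟨c, hc, hd⟩ := (Finset.mem_filter.mp hz).2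
    have hcrw : c = p.insertNth (c p) (p.removeNth c) := (Fin.insertNth_self_removeNth p c).symm
    rw [hcrw] at hc hd
    rw [mem_comp] at hc
    rw [hammingDist_insertNth] at hd
    rcases eq_or_ne (c p) ε with hep | hep
    · apply Finset.mem_union_left
      refine Finset.mem_filter.mpr ⟨mem_univ _, p.removeNth c, ?_, ?_⟩
      · rw [← hep]; exact hc
      · rw [hep] at hd; simpa using hd
    · apply Finset.mem_union_right
      have hcd : c p = δ := fin2_eq_of_ne hep (Ne.symm hne) ▸ rfl
      have hd0 : hammingDist (p.removeNth c) z' = 0 := by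
        have : ¬ (c p = ε) := hep
        simp only [if_neg hep] at hd
        omega
      rw [hammingDist_eq_zero.mp hd0] at hc
      rw [← hcd]
      exact hc
  · intro z' hz
    rcases Finset.mem_union.mp hz with h | h
    · exact nbhd_sec_subset p ε (comp p S) (by rw [sec_comp]; exact h)
    · have h' : z' ∈ sec p δ (comp p S) := by rw [sec_comp]; exact h
      exact sec_subset_nbhd p δ ε (comp p S) h'

lemma card_nbhd_comp (p : Fin (m+1)) (S : Finset (Q (m+1))) :
    (nbhd (comp p S)).card
      = max (phi m ((sec p 0 S).card)) ((sec p 1 S).card)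
        + max (phi m ((sec p 1 S).card)) ((sec p 0 S).card) := by
  rw [card_sec_sum p (nbhd (comp p S)), sec_nbhd_comp (by decide : (0:Fin 2) ≠ 1),
    sec_nbhd_comp (by decide : (1:Fin 2) ≠ 0), card_prefixK, card_prefixK,
    min_eq_left (by
      apply max_le (phi_le_card _)
      exact card_sec_le p 1 S),
    min_eq_left (by
      apply max_le (phi_le_card _)
      exact card_sec_le p 0 S)]

lemma card_nbhd_ge (p : Fin (m+1)) (S : Finset (Q (m+1)))
    (ih : ∀ S' : Finset (Q m), phi m S'.card ≤ (nbhd S').card) :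
    max (phi m ((sec p 0 S).card)) ((sec p 1 S).card)
      + max (phi m ((sec p 1 S).card)) ((sec p 0 S).card) ≤ (nbhd S).card := by
  rw [card_sec_sum p (nbhd S)]
  have h0 : max (phi m ((sec p 0 S).card)) ((sec p 1 S).card) ≤ (sec p 0 (nbhd S)).card := by
    apply max_le
    · calc phi m ((sec p 0 S).card) ≤ (nbhd (sec p 0 S)).card := ih _
        _ ≤ _ := Finset.card_le_card (nbhd_sec_subset p 0 S)
    · exact Finset.card_le_card (sec_subset_nbhd p 1 0 S)
  have h1 : max (phi m ((sec p 1 S).card)) ((sec p 0 S).card) ≤ (sec p 1 (nbhd S)).card := by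
    apply max_le
    · calc phi m ((sec p 1 S).card) ≤ (nbhd (sec p 1 S)).card := ih _
        _ ≤ _ := Finset.card_le_card (nbhd_sec_subset p 1 S)
    · exact Finset.card_le_card (sec_subset_nbhd p 0 1 S)
  omega

lemma card_nbhd_comp_le (p : Fin (m+1)) (S : Finset (Q (m+1)))
    (ih : ∀ S' : Finset (Q m), phi m S'.card ≤ (nbhd S').card) :
    (nbhd (comp p S)).card ≤ (nbhd S).card := by
  rw [card_nbhd_comp]
  exact card_nbhd_ge p S ih


lemma sum_lt_of_initial {β : Type*} [DecidableEq β] (g : β → ℕ) (T P : Finset β)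
    (hc : T.card = P.card)
    (hstrict : ∀ pp ∈ P \ T, ∀ qq ∈ T \ P, g pp < g qq) (hne : T ≠ P) :
    ∑ x ∈ P, g x < ∑ x ∈ T, g x := by
  have hd : (T \ P).card = (P \ T).card := Finset.card_sdiff_comm hc
  have hne1 : (T \ P).Nonempty := by
    rw [Finset.sdiff_nonempty]
    intro hsub
    exact hne (Finset.eq_of_subset_of_card_le hsub (le_of_eq hc.symm))
  have hne2 : (P \ T).Nonempty := by
    rw [Finset.sdiff_nonempty]
    intro hsub
    exact hne (Finset.eq_of_subset_of_card_le hsub (le_of_eq hc)).symm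
  have hsplit1 : ∑ x ∈ P, g x = ∑ x ∈ P ∩ T, g x + ∑ x ∈ P \ T, g x :=
    (Finset.sum_inter_add_sum_sdiff P T g).symm
  have hsplit2 : ∑ x ∈ T, g x = ∑ x ∈ T ∩ P, g x + ∑ x ∈ T \ P, g x :=
    (Finset.sum_inter_add_sum_sdiff T P g).symm
  rw [hsplit1, hsplit2, Finset.inter_comm P T]
  have hkey : ∑ x ∈ P \ T, g x < ∑ x ∈ T \ P, g x := by
    have e := Finset.equivOfCardEq (hd.symm)
    have h1 : ∑ x ∈ P \ T, g x = ∑ i : (P \ T : Finset β), g i := (Finset.sum_coe_sort _ g).symm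
    have h2 : ∑ x ∈ T \ P, g x = ∑ i : (T \ P : Finset β), g i := (Finset.sum_coe_sort _ g).symm
    rw [h1, h2, ← Equiv.sum_comp e (fun j => g (j : β))]
    have : Nonempty (P \ T : Finset β) := by
      obtain ⟨x, hx⟩ := hne2
      exact ⟨⟨x, hx⟩⟩
    apply Finset.sum_lt_sum_of_nonempty (Finset.univ_nonempty)
    intro i _
    exact hstrict i i.2 (e i) (e i).2
  omega

lemma eq_of_sec_eq {p : Fin (m+1)} {S T : Finset (Q (m+1))}
    (h : ∀ ε, sec p ε S = sec p ε T) : S = T := by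
  ext x
  have hx : x = p.insertNth (x p) (p.removeNth x) := (Fin.insertNth_self_removeNth p x).symm
  rw [hx, ← mem_sec, ← mem_sec, h]

lemma keysum_comp_lt (p : Fin (m+1)) (S : Finset (Q (m+1))) (hne : comp p S ≠ S) :
    ∑ x ∈ comp p S, srk x < ∑ x ∈ S, srk x := by
  have hsec : ∀ ε : Fin 2, sec p ε (comp p S) = prefixK m ((sec p ε S).card) := sec_comp p S
  have hle : ∀ ε : Fin 2,
      ∑ x' ∈ prefixK m ((sec p ε S).card), srk (p.insertNth ε x' : Q (m+1))
        ≤ ∑ x' ∈ sec p ε S, srk (p.insertNth ε x' : Q (m+1)) := by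
    intro ε
    rcases eq_or_ne (sec p ε S) (prefixK m ((sec p ε S).card)) with heq | hne'
    · rw [← heq]
    · apply le_of_lt
      apply sum_lt_of_initial _ _ _ ?_ ?_ hne'
      · rw [card_prefixK, min_eq_left (card_sec_le p ε S)]
      · intro pp hpp qq hqq
        have h1 : srk pp < (sec p ε S).card := by
          have := (Finset.mem_sdiff.mp hpp).1
          exact (Finset.mem_filter.mp this).2
        have h2 : ¬ srk qq < (sec p ε S).card := by
          intro h
          exact (Finset.mem_sdiff.mp hqq).2 (Finset.mem_filter.mpr ⟨mem_univ _, h⟩)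
        have hlt : slt pp qq := slt_of_srk_lt (by omega)
        exact srk_lt_srk (slt_insertNth.mpr hlt)
  have hstrict : ∃ ε : Fin 2, sec p ε S ≠ prefixK m ((sec p ε S).card) := by
    by_contra hno
    push_neg at hno
    apply hne
    apply eq_of_sec_eq (p := p)
    intro ε
    rw [hsec ε, ← hno ε]
  rw [sum_sec p (comp p S) srk, sum_sec p S srk, hsec 0, hsec 1]
  obtain ⟨ε, hep⟩ := hstrict
  have hlt : ∑ x' ∈ prefixK m ((sec p ε S).card), srk (p.insertNth ε x' : Q (m+1))
      < ∑ x' ∈ sec p ε S, srk (p.insertNth ε x' : Q (m+1)) := by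
    apply sum_lt_of_initial _ _ _ ?_ ?_ hep
    · rw [card_prefixK, min_eq_left (card_sec_le p ε S)]
    · intro pp hpp qq hqq
      have h1 : srk pp < (sec p ε S).card := by
        have := (Finset.mem_sdiff.mp hpp).1
        exact (Finset.mem_filter.mp this).2
      have h2 : ¬ srk qq < (sec p ε S).card := by
        intro h
        exact (Finset.mem_sdiff.mp hqq).2 (Finset.mem_filter.mpr ⟨mem_univ _, h⟩)
      have hlt : slt pp qq := slt_of_srk_lt (by omega)
      exact srk_lt_srk (slt_insertNth.mpr hlt)
  rcases fin2 ε with rfl | rfl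
  · have := hle 1
    omega
  · have := hle 0
    omega


/-! ### endgame -/

def compl (z : Q (m+1)) : Q (m+1) := fun i => 1 - z i

lemma compl_ne (z : Q (m+1)) (i : Fin (m+1)) : compl z i ≠ z i := by
  rw [compl]
  rcases fin2 (z i) with h | h <;> rw [h] <;> decide

lemma compl_inj {z u : Q (m+1)} (h : compl z = compl u) : z = u := by
  funext i
  have := congrFun h i
  rw [compl, compl] at this
  rcases fin2 (z i) with h1 | h1 <;> rcases fin2 (u i) with h2 | h2 <;>
    rw [h1, h2] at this ⊢ <;> first | rfl | (exact absurd this (by decide))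

lemma wt_compl (z : Q (m+1)) : wt z + wt (compl z) = m + 1 := by
  rw [wt, wt, ← Finset.sum_add_distrib]
  have h : ∀ i ∈ (univ : Finset (Fin (m+1))), ((z i : ℕ) + ((compl z) i : ℕ)) = 1 := by
    intro i _
    rw [compl]
    rcases fin2 (z i) with h | h <;> rw [h] <;> decide
  rw [Finset.sum_congr rfl h, Finset.sum_const, Finset.card_univ, Fintype.card_fin, smul_eq_mul,
    mul_one]

lemma wt_exists_one {z : Q (m+1)} (h : 1 ≤ wt z) : ∃ j, z j = 1 := by
  by_contra hno
  push_neg at hno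
  have : wt z = 0 := by
    apply Finset.sum_eq_zero
    intro i _
    rcases fin2 (z i) with h' | h'
    · rw [h']; rfl
    · exact absurd h' (hno i)
  omega

lemma wt_zero_eq {z : Q (m+1)} (h : wt z = 0) : z = fun _ => 0 := by
  funext i
  exact fin2_val0 (Finset.sum_eq_zero_iff.mp h i (mem_univ i))

lemma wt_le {z : Q (m+1)} : wt z ≤ m + 1 := by
  calc wt z ≤ ∑ _i : Fin (m+1), 1 := Finset.sum_le_sum (fun i _ => Fin.is_le (z i))
    _ = m + 1 := by rw [Finset.sum_const, Finset.card_univ, Fintype.card_fin, smul_eq_mul, mul_one]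

lemma wt_full {z : Q (m+1)} (h : wt z = m + 1) (i : Fin (m+1)) : z i = 1 := by
  by_contra hne
  have hzi : z i = 0 := by
    rcases fin2 (z i) with h' | h'
    · exact h'
    · exact absurd h' hne
  have h1 : wt z = (z i : ℕ) + ∑ j ∈ univ.erase i, (z j : ℕ) :=
    (Finset.add_sum_erase univ (fun j => ((z j : ℕ))) (mem_univ i)).symm
  have h2 : ∑ j ∈ univ.erase i, (z j : ℕ) ≤ ∑ _j ∈ univ.erase i, 1 :=
    Finset.sum_le_sum (fun j _ => Fin.is_le (z j))
  rw [Finset.sum_const, smul_eq_mul, mul_one, Finset.card_erase_of_mem (mem_univ i),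
    Finset.card_univ, Fintype.card_fin] at h2
  rw [hzi] at h1
  simp only [Fin.val_zero, zero_add] at h1
  omega

lemma endgame {S : Finset (Q (m+1))} (hfc : ∀ p, comp p S = S) (hndc : ¬ DC S)
    (ihm : ∀ S' : Finset (Q m), phi m S'.card ≤ (nbhd S').card) :
    phi (m+1) S.card ≤ (nbhd S).card := by
  -- sections of S are prefixes
  have secS : ∀ (p : Fin (m+1)) (ε : Fin 2), sec p ε S = prefixK m ((sec p ε S).card) := by
    intro p ε
    conv_lhs => rw [← hfc p]
    rw [sec_comp]
  -- E1
  have E1 : ∀ (x y : Q (m+1)) (p : Fin (m+1)), x p = y p → slt x y → y ∈ S → x ∈ S := by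
    intro x y p hp hlt hyS
    have hy' : p.removeNth y ∈ sec p (y p) S := by
      rw [mem_sec, ← hp]
      conv => rw [hp, Fin.insertNth_self_removeNth]
      exact hyS
    rw [secS] at hy'
    have hy'' : srk (p.removeNth y) < (sec p (y p) S).card := (Finset.mem_filter.mp hy').2
    have hxy' : slt (p.removeNth x) (p.removeNth y) := (slt_section hp).mp hlt
    have hx' : p.removeNth x ∈ sec p (y p) S := by
      rw [secS]
      exact Finset.mem_filter.mpr ⟨mem_univ _, lt_trans (srk_lt_srk hxy') hy''⟩
    rw [mem_sec] at hx'
    rwa [← hp, Fin.insertNth_self_removeNth] at hx'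
  -- inversions are complement pairs
  have hinv : ∀ u v : Q (m+1), slt u v → v ∈ S → u ∉ S → v = compl u := by
    intro u v hlt hvS huS
    funext i
    rcases eq_or_ne (u i) (v i) with he | hne
    · exact absurd (E1 u v i he hlt hvS) huS
    · rw [compl]
      rcases fin2 (u i) with h1 | h1 <;> rcases fin2 (v i) with h2 | h2 <;>
        rw [h1] at hne <;> rw [h2] at hne ⊢ <;> rw [h1] <;>
        first | decide | (exact absurd rfl hne)
  -- obtain an inversion
  rw [DC] at hndc
  push_neg at hndc
  obtain ⟨z, y0, hlt0, hy0S, hzS⟩ := hndc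
  have hy0 : y0 = compl z := hinv z y0 hlt0 hy0S hzS
  rw [hy0] at hy0S hlt0
  have hzy : slt z (compl z) := hlt0
  have hyS : compl z ∈ S := hy0S
  -- uniqueness of the inversion
  have huniq : ∀ u v : Q (m+1), slt u v → v ∈ S → u ∉ S → u = z := by
    intro u v hu hvS huS
    have hv := hinv u v hu hvS huS
    rw [hv] at hvS hu
    by_contra hne
    have h1 : z ≠ compl u := fun h => hzS (h ▸ hvS)
    have h2 : ¬ slt z (compl u) := by
      intro h
      have := hinv z (compl u) h hvS hzS
      exact hne (compl_inj this)
    have h3 : slt (compl u) z := by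
      rcases slt_total h1 with hh | hh
      · exact absurd hh h2
      · exact hh
    have h4 : u ≠ compl z := fun h => huS (h ▸ hyS)
    have h5 : ¬ slt u (compl z) := by
      intro h
      have := hinv u (compl z) h hyS huS
      exact hne (compl_inj this).symm
    have h6 : slt (compl z) u := by
      rcases slt_total h4 with hh | hh
      · exact absurd hh h5
      · exact hh
    exact slt_irrefl z (slt_trans (slt_trans (slt_trans hzy h6) hu) h3)
  -- description of S
  have memS : ∀ x : Q (m+1), x ∈ S ↔ ((x = compl z ∨ slt x (compl z)) ∧ x ≠ z) := by
    intro x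
    constructor
    · intro hxS
      refine ⟨?_, fun h => hzS (h ▸ hxS)⟩
      by_contra hcon
      push_neg at hcon
      obtain ⟨hne1, hns⟩ := hcon
      have hyx : slt (compl z) x := by
        rcases slt_total hne1 with hh | hh
        · exact absurd hh hns
        · exact hh
      have hzx : slt z x := slt_trans hzy hyx
      have := huniq z x hzx hxS hzS
      have hy' := hinv z x hzx hxS hzS
      rw [hy'] at hyx
      exact slt_irrefl _ hyx
    · rintro ⟨hle, hne⟩
      rcases hle with rfl | hlt
      · exact hyS
      · by_contra hxS
        exact hne (huniq x (compl z) hlt hyS hxS)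
  -- the comparison prefix C
  set C : Finset (Q (m+1)) := prefixK (m+1) (srk (compl z)) with hC
  have hCmem : ∀ x : Q (m+1), x ∈ C ↔ slt x (compl z) := by
    intro x
    rw [hC, prefixK, Finset.mem_filter]
    constructor
    · intro h
      exact slt_of_srk_lt h.2
    · intro h
      exact ⟨mem_univ _, srk_lt_srk h⟩
  have hzC : z ∈ C := (hCmem z).mpr hzy
  have hyC : compl z ∉ C := fun h => slt_irrefl _ ((hCmem _).mp h)
  have hSform : S = (insert (compl z) C).erase z := by
    ext x
    rw [memS, Finset.mem_erase, Finset.mem_insert, hCmem]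
    tauto
  have hcardC : C.card = srk (compl z) := by
    rw [hC, card_prefixK]
    exact min_eq_left (le_of_lt (srk_lt_card _))
  have hcardS : S.card = srk (compl z) := by
    rw [hSform, Finset.card_erase_of_mem (Finset.mem_insert_of_mem hzC),
      Finset.card_insert_of_notMem hyC, hcardC]
    omega
  have hphi : phi (m+1) S.card = (nbhd C).card := by
    rw [hcardS, phi, hC]
  rw [hphi]
  -- main case split on wt z
  rcases Nat.eq_zero_or_pos (wt z) with hw0 | hwpos
  · -- z is the bottom element; S = univ \ {z} and nbhd S = univ
    have hz0 : z = fun _ => 0 := wt_zero_eq hw0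
    have hwy : wt (compl z) = m + 1 := by
      have := wt_compl z
      omega
    have huniv : ∀ w : Q (m+1), w ∈ nbhd S := by
      intro w
      rcases eq_or_ne w z with rfl | hwz
      · -- use update w 0 1
        have h00 : w 0 = 0 := by rw [hz0]
        set s : Q (m+1) := Function.update w 0 1 with hs
        have hsne : s ≠ w := by
          intro h
          have h5 := congrFun h 0
          rw [hs, Function.update_self] at h5
          rw [h00] at h5
          exact absurd h5 (by decide)
        have hwts : wt s = 1 := by
          rw [hs, wt_update, h00, hw0]
          decide
        have hsS : s ∈ S := by
          rw [memS]
          refine ⟨?_, hsne⟩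
          rcases eq_or_ne s (compl w) with he | hne2
          · exact Or.inl he
          · refine Or.inr (Or.inl ?_)
            rw [hwts, hwy]
            by_contra hge
            apply hne2
            funext i
            have hwi : w i = 0 := by rw [hz0]
            rw [wt_full (by omega : wt s = m + 1) i]
            show (1 : Fin 2) = 1 - w i
            rw [hwi]
            decide
        refine Finset.mem_filter.mpr ⟨mem_univ _, s, hsS, ?_⟩
        rw [hammingDist_comm]
        exact dist_update w 0 1
      · have hwS : w ∈ S := by
          rw [memS]
          refine ⟨?_, hwz⟩
          rcases eq_or_ne w (compl z) with rfl | hne2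
          · exact Or.inl rfl
          · refine Or.inr (Or.inl ?_)
            have h1 : wt w ≤ m + 1 := wt_le
            rcases Nat.lt_or_ge (wt w) (m+1) with h2 | h2
            · omega
            · have h3 : wt w = m + 1 := by omega
              exfalso
              apply hne2
              funext i
              have hwi : z i = 0 := by rw [hz0]
              rw [wt_full h3 i]
              show (1 : Fin 2) = 1 - z i
              rw [hwi]
              decide
        exact subset_nbhd S hwS
    calc (nbhd C).card ≤ (univ : Finset (Q (m+1))).card :=
          Finset.card_le_card (Finset.subset_univ _)
      _ ≤ (nbhd S).card := Finset.card_le_card (fun w _ => huniv w)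
  · -- wt z ≥ 1
    obtain ⟨jj, hjj⟩ := wt_exists_one hwpos
    have hwzy : wt z ≤ wt (compl z) := slt_wt hzy
    apply Finset.card_le_card
    intro v hv
    obtain ⟨c, hcC, hcd⟩ := (Finset.mem_filter.mp hv).2
    rcases eq_or_ne c z with rfl | hcz
    swap
    · -- c ≠ z : c ∈ S directly
      have hcS : c ∈ S := (memS c).mpr ⟨Or.inr ((hCmem c).mp hcC), hcz⟩
      exact Finset.mem_filter.mpr ⟨mem_univ _, c, hcS, hcd⟩
    · -- c = z
      rcases eq_or_ne v c with rfl | hvz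
      · -- v = z: use update z jj 0
        set s : Q (m+1) := Function.update v jj 0 with hs
        have hsS : s ∈ S := by
          rw [memS]
          constructor
          · refine Or.inr (Or.inl ?_)
            rw [hs, wt_update, hjj]
            simp only [Fin.val_one, Fin.val_zero]
            omega
          · intro h
            have := congrFun h jj
            rw [hs, Function.update_self, hjj] at this
            exact absurd this (by decide)
        refine Finset.mem_filter.mpr ⟨mem_univ _, s, hsS, ?_⟩
        rw [hs, hammingDist_comm]
        exact dist_update v jj 0
      · obtain ⟨i, hvu, hvi⟩ := dist_one_exists hcd hvz.symm
        rcases fin2 (v i) with hvi0 | hvi1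
        · -- v i = 0, z i = 1: v ∈ S itself
          have hzi : c i = 1 := by
            rcases fin2 (c i) with h' | h'
            · exact absurd (hvi0.trans h'.symm) hvi
            · exact h'
          have hwv : wt v = wt c - 1 := by
            rw [hvu, wt_update, hzi, hvi0]
            simp
          have hvS : v ∈ S := by
            rw [memS]
            refine ⟨Or.inr (Or.inl ?_), hvz⟩
            omega
          refine Finset.mem_filter.mpr ⟨mem_univ _, v, hvS, by rw [hammingDist_self]; omega⟩
        · -- v i = 1, z i = 0
          have hzi : c i = 0 := by
            rcases fin2 (c i) with h' | h'
            · exact h'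
            · exact absurd (hvi1.trans h'.symm) hvi
          have hwv : wt v = wt c + 1 := by
            rw [hvu, wt_update, hzi, hvi1]
            simp
          have hjji : jj ≠ i := fun h => by rw [h, hzi] at hjj; exact absurd hjj (by decide)
          rcases Nat.lt_or_ge (wt c) (wt (compl c)) with hltw | hgew
          · -- strict weight gap: drop jj from v
            set s : Q (m+1) := Function.update v jj 0 with hs
            have hvjj : v jj = 1 := by
              rw [hvu, Function.update_of_ne hjji, hjj]
            have hsS : s ∈ S := by
              rw [memS]
              constructor
              · refine Or.inr (Or.inl ?_)
                rw [hs, wt_update, hvjj]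
                simp only [Fin.val_one, Fin.val_zero]
                omega
              · intro h
                have := congrFun h i
                rw [hs, Function.update_of_ne (Ne.symm hjji), hvi1] at this
                rw [← this] at hzi
                exact absurd hzi (by decide)
            refine Finset.mem_filter.mpr ⟨mem_univ _, s, hsS, ?_⟩
            rw [hs, hammingDist_comm]
            exact dist_update v jj 0
          · -- wt z = wt (compl z): endgame of endgame
            have heqw : wt c = wt (compl c) := by omega
            have hsd : sdlt c (compl c) := by
              rcases hzy with hh | ⟨_, hh⟩
              · omega
              · exact hh
            obtain ⟨i0, hagr, hz1, hy0'⟩ := hsd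
            have hmin : ∀ j, ¬ j < i0 := fun j hj => (compl_ne c j) (hagr j hj).symm
            have hii0 : i ≠ i0 := fun h => by rw [h, hz1] at hzi; exact absurd hzi (by decide)
            by_cases hjex : ∃ jj', c jj' = 1 ∧ jj' ≠ i0
            · obtain ⟨jj', hj1, hj2⟩ := hjex
              have hjji' : jj' ≠ i := fun h => by rw [h, hzi] at hj1; exact absurd hj1 (by decide)
              set s : Q (m+1) := Function.update v jj' 0 with hs
              have hvjj' : v jj' = 1 := by
                rw [hvu, Function.update_of_ne hjji', hj1]
              have hsS : s ∈ S := by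
                rw [memS]
                constructor
                · refine Or.inr (Or.inr ⟨?_, ?_⟩)
                  · rw [hs, wt_update, hvjj']
                    simp only [Fin.val_one, Fin.val_zero]
                    omega
                  · refine ⟨i0, fun j hj => absurd hj (hmin j), ?_, hy0'⟩
                    rw [hs, Function.update_of_ne (fun hh => hj2 hh.symm), hvu,
                      Function.update_of_ne hii0.symm]
                    exact hz1
                · intro h
                  have := congrFun h i
                  rw [hs, Function.update_of_ne (Ne.symm hjji'), hvi1] at this
                  rw [← this] at hzi
                  exact absurd hzi (by decide)
              refine Finset.mem_filter.mpr ⟨mem_univ _, s, hsS, ?_⟩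
              rw [hs, hammingDist_comm]
              exact dist_update v jj' 0
            · -- supp c = {i0}; dimension must be 2; use compl c
              push_neg at hjex
              have hwc1 : wt c = 1 := by
                have h1 : wt c = (c i0 : ℕ) + ∑ j ∈ univ.erase i0, (c j : ℕ) :=
                  (Finset.add_sum_erase univ (fun j => ((c j : ℕ))) (mem_univ i0)).symm
                have h2 : ∑ j ∈ univ.erase i0, (c j : ℕ) = 0 := by
                  apply Finset.sum_eq_zero
                  intro j hj
                  have hji0 : j ≠ i0 := (Finset.mem_erase.mp hj).1
                  rcases fin2 (c j) with h' | h'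
                  · rw [h']; rfl
                  · exact absurd (hjex j h') hji0
                rw [h2, hz1] at h1
                simpa using h1
              have hm1 : m = 1 := by
                have := wt_compl c
                omega
              refine Finset.mem_filter.mpr ⟨mem_univ _, compl c, hyS, ?_⟩
              rw [hammingDist_card]
              have hsub : (univ.filter (fun j => (compl c) j ≠ v j)) ⊆ {i0} := by
                intro j hj
                have hj' : (compl c) j ≠ v j := (Finset.mem_filter.mp hj).2
                rw [Finset.mem_singleton]
                by_contra hji0
                have hji : j ≠ i := by
                  intro h
                  apply hj'
                  rw [h, hvi1]
                  show (1 - c i : Fin 2) = 1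
                  rw [hzi]
                  decide
                exfalso
                have hcard3 : ({i0, i, j} : Finset (Fin (m+1))).card = 3 := by
                  rw [Finset.card_insert_of_notMem, Finset.card_insert_of_notMem,
                    Finset.card_singleton]
                  · rw [Finset.mem_singleton]
                    exact fun h => hji h.symm
                  · intro h
                    rcases Finset.mem_insert.mp h with h' | h'
                    · exact hii0 h'.symm
                    · exact hji0 ((Finset.mem_singleton.mp h').symm)
                have hcardle : ({i0, i, j} : Finset (Fin (m+1))).card ≤ m + 1 := by
                  have h9 := Finset.card_le_card
                    (Finset.subset_univ ({i0, i, j} : Finset (Fin (m+1))))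
                  rwa [Finset.card_univ, Fintype.card_fin] at h9
                omega
              calc _ ≤ ({i0} : Finset (Fin (m+1))).card := Finset.card_le_card hsub
                _ = 1 := Finset.card_singleton i0

end Compression

theorem harper : ∀ {n : ℕ} (S : Finset (Q n)), phi n S.card ≤ (nbhd S).card := by
  intro n
  induction n with
  | zero =>
    intro S
    have hdc : DC S := by
      intro z y hzy _
      exfalso
      rcases hzy with h | ⟨_, ⟨i, _⟩⟩
      · rw [wt, wt] at h
        simp at h
      · exact i.elim0
    exact harper_of_DC hdc
  | succ m ih =>
    have main : ∀ (W : ℕ) (S : Finset (Q (m+1))), (∑ x ∈ S, srk x) < W →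
        phi (m+1) S.card ≤ (nbhd S).card := by
      intro W
      induction W with
      | zero => intro S h; omega
      | succ W IH =>
        intro S hW
        by_cases hfc : ∀ p, comp p S = S
        · by_cases hdc : DC S
          · exact harper_of_DC hdc
          · exact endgame hfc hdc ih
        · push_neg at hfc
          obtain ⟨p, hp⟩ := hfc
          have h1 := keysum_comp_lt p S hp
          have h2 := IH (comp p S) (by omega)
          rw [card_comp] at h2
          exact le_trans h2 (card_nbhd_comp_le p S ih)
    intro S
    exact main ((∑ x ∈ S, srk x) + 1) S (by omega)


/-! ### t-fold neighbourhoods -/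
section Iterate
variable {n : ℕ}

noncomputable def nbhdT (t : ℕ) (S : Finset (Q n)) : Finset (Q n) :=
  univ.filter (fun z => ∃ x ∈ S, hammingDist x z ≤ t)

noncomputable def phiT (n t k : ℕ) : ℕ := (phi n)^[t] k

lemma nbhdT_zero (S : Finset (Q n)) : nbhdT 0 S = S := by
  ext z
  rw [nbhdT, Finset.mem_filter]
  constructor
  · rintro ⟨_, x, hx, hd⟩
    have : hammingDist x z = 0 := by omega
    rwa [← hammingDist_eq_zero.mp this]
  · intro hz
    exact ⟨mem_univ z, z, hz, by rw [hammingDist_self]⟩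

lemma dist_drop {x z : Q n} {i : Fin n} (h : x i ≠ z i) :
    hammingDist x (Function.update z i (x i)) + 1 = hammingDist x z := by
  rw [hammingDist_card, hammingDist_card]
  have he : (univ.filter (fun j => x j ≠ Function.update z i (x i) j))
      = (univ.filter (fun j => x j ≠ z j)).erase i := by
    ext j
    simp only [Finset.mem_filter, Finset.mem_erase, mem_univ, true_and]
    rcases eq_or_ne j i with rfl | hne
    · rw [Function.update_self]
      simp
    · rw [Function.update_of_ne hne]
      simp [hne]
  rw [he, Finset.card_erase_of_mem (Finset.mem_filter.mpr ⟨mem_univ i, h⟩)]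
  have hpos : 0 < (univ.filter (fun j => x j ≠ z j)).card :=
    Finset.card_pos.mpr ⟨i, Finset.mem_filter.mpr ⟨mem_univ i, h⟩⟩
  omega

lemma nbhdT_succ (t : ℕ) (S : Finset (Q n)) : nbhdT (t+1) S = nbhd (nbhdT t S) := by
  ext z
  rw [nbhdT, Finset.mem_filter, nbhd, Finset.mem_filter]
  constructor
  · rintro ⟨_, x, hx, hd⟩
    refine ⟨mem_univ z, ?_⟩
    by_cases hle : hammingDist x z ≤ t
    · exact ⟨z, Finset.mem_filter.mpr ⟨mem_univ z, x, hx, hle⟩, by rw [hammingDist_self]; omega⟩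
    · have hne : x ≠ z := by
        intro h
        rw [h, hammingDist_self] at hle
        omega
      have hex : ∃ i, x i ≠ z i := by
        by_contra hno
        push_neg at hno
        exact hne (funext hno)
      obtain ⟨i, hi⟩ := hex
      refine ⟨Function.update z i (x i), Finset.mem_filter.mpr ⟨mem_univ _, x, hx, ?_⟩, ?_⟩
      · have := dist_drop hi
        omega
      · rw [hammingDist_comm]
        exact dist_update z i (x i)
  · rintro ⟨_, w, hw, hd⟩
    obtain ⟨_, x, hx, hd'⟩ := Finset.mem_filter.mp hw
    refine ⟨mem_univ z, x, hx, ?_⟩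
    calc hammingDist x z ≤ hammingDist x w + hammingDist w z := hammingDist_triangle x w z
      _ ≤ t + 1 := by omega

lemma nbhdT_prefixK (t k : ℕ) : nbhdT t (prefixK n k) = prefixK n (phiT n t k) := by
  induction t with
  | zero => rw [nbhdT_zero, phiT, Function.iterate_zero, id]
  | succ t iht =>
    rw [nbhdT_succ, iht, nbhd_prefixK, phiT, phiT, Function.iterate_succ_apply']

lemma harperT (t : ℕ) (S : Finset (Q n)) : phiT n t S.card ≤ (nbhdT t S).card := by
  induction t with
  | zero => rw [nbhdT_zero, phiT, Function.iterate_zero, id]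
  | succ t iht =>
    rw [nbhdT_succ, phiT, Function.iterate_succ_apply']
    calc (phi n) ((phi n)^[t] S.card) ≤ phi n ((nbhdT t S).card) := phi_mono iht
      _ ≤ _ := harper (nbhdT t S)

lemma phiT_mono (t : ℕ) {k k' : ℕ} (h : k ≤ k') : phiT n t k ≤ phiT n t k' := by
  induction t with
  | zero => simpa [phiT] using h
  | succ t iht =>
    rw [phiT, Function.iterate_succ_apply', phiT, Function.iterate_succ_apply']
    exact phi_mono iht

end Iterate

/-! ### main theorem -/
section Main
variable {n t : ℕ}

lemma phiT_le_card (t k : ℕ) : phiT n t k ≤ Fintype.card (Q n) ∨ phiT n t k = k := by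
  induction t with
  | zero => exact Or.inr rfl
  | succ t iht =>
    left
    rw [phiT, Function.iterate_succ_apply']
    exact phi_le_card _

lemma le_phiT (t : ℕ) {k : ℕ} (hk : k ≤ Fintype.card (Q n)) : k ≤ phiT n t k := by
  induction t with
  | zero => rw [phiT, Function.iterate_zero, id]
  | succ t iht =>
    rw [phiT, Function.iterate_succ_apply']
    calc k ≤ phiT n t k := iht
      _ ≤ phi n (phiT n t k) := by
          have h1 : min (phiT n t k) (Fintype.card (Q n)) ≤ phi n (phiT n t k) := le_phi _
          rcases phiT_le_card (n := n) t k with h | h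
          · omega
          · rw [h] at h1 ⊢
            omega

lemma subset_nbhdT (t : ℕ) (S : Finset (Q n)) : S ⊆ nbhdT t S := by
  intro x hx
  exact Finset.mem_filter.mpr ⟨mem_univ x, x, hx, by rw [hammingDist_self x]; omega⟩

/-- the monotone numbering -/
noncomputable def eqv (n : ℕ) : Q n ≃ Fin (Fintype.card (Q n)) :=
  Equiv.ofBijective (fun x => ⟨srk x, srk_lt_card x⟩)
    (by
      rw [Fintype.bijective_iff_injective_and_card]
      constructor
      · intro x y h
        exact srk_inj (by simpa using congrArg Fin.val h)
      · rw [Fintype.card_fin])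

lemma eqv_val (x : Q n) : ((eqv n x : Fin (Fintype.card (Q n))) : ℕ) = srk x := rfl

/-- Part B: the key lower bound from a path decomposition -/
lemma decomp_bound {m : ℕ} (D : PathDecomp (genHamming t 2 n) m)
    (r : ℕ) (hr1 : 1 ≤ r) (hr2 : r + 1 ≤ Fintype.card (Q n)) :
    phiT n t r + 1 ≤ (Finset.univ.sup fun i => (D.bag i).card) + r := by
  classical
  set N := Fintype.card (Q n) with hN
  set W : ℕ := Finset.univ.sup fun i => (D.bag i).card with hW
  set k := N - r with hk
  -- first-appearance data
  have hne : ∀ v : Q n, (univ.filter (fun i : Fin m => v ∈ D.bag i)).Nonempty := by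
    intro v
    obtain ⟨i, hi⟩ := D.cover v
    exact ⟨i, Finset.mem_filter.mpr ⟨mem_univ i, hi⟩⟩
  set jv : Q n → Fin m := fun v => (univ.filter (fun i : Fin m => v ∈ D.bag i)).min' (hne v)
    with hjv
  have hjv_mem : ∀ v, v ∈ D.bag (jv v) := by
    intro v
    have := Finset.min'_mem _ (hne v)
    exact (Finset.mem_filter.mp this).2
  have hjv_min : ∀ v (l : Fin m), v ∈ D.bag l → jv v ≤ l := by
    intro v l hl
    exact Finset.min'_le _ l (Finset.mem_filter.mpr ⟨mem_univ l, hl⟩)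
  set rel : Q n → Q n → Prop :=
    fun v w => (jv v : ℕ) < (jv w : ℕ) ∨ ((jv v : ℕ) = (jv w : ℕ) ∧ srk v < srk w) with hrel
  haveI hdec : DecidableRel rel := fun v w =>
    inferInstanceAs (Decidable ((jv v : ℕ) < (jv w : ℕ) ∨ ((jv v : ℕ) = (jv w : ℕ) ∧ srk v < srk w)))
  have htr : ∀ {a b c : Q n}, rel a b → rel b c → rel a c := by
    intro a b c h1 h2
    rw [hrel] at *
    rcases h1 with h1 | ⟨h1, h1'⟩ <;> rcases h2 with h2 | ⟨h2, h2'⟩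
    · exact Or.inl (by omega)
    · exact Or.inl (by omega)
    · exact Or.inl (by omega)
    · exact Or.inr ⟨by omega, by omega⟩
  have hirr : ∀ {a : Q n}, ¬ rel a a := by
    intro a h
    rw [hrel] at h
    rcases h with h | ⟨_, h⟩ <;> omega
  have htot : ∀ {a b : Q n}, a ≠ b → rel a b ∨ rel b a := by
    intro a b hab
    rw [hrel]
    have hsrk : srk a ≠ srk b := fun h => hab (srk_inj h)
    rcases Nat.lt_trichotomy (jv a : ℕ) (jv b : ℕ) with h | h | h
    · exact Or.inl (Or.inl h)
    · rcases Nat.lt_or_ge (srk a) (srk b) with h' | h'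
      · exact Or.inl (Or.inr ⟨h, h'⟩)
      · exact Or.inr (Or.inr ⟨h.symm, by omega⟩)
    · exact Or.inr (Or.inl h)
  have hcardQ : Fintype.card (Q n) = N := hN.symm
  -- the prefix of the first-appearance order
  set Pk : Finset (Q n) := univ.filter (fun v => rk rel v < k) with hPk
  have hkN : k < N := by omega
  have hcardPk : Pk.card = k := by
    rw [hPk, card_rk_lt rel htr hirr htot k, hcardQ]
    omega
  obtain ⟨v0, hv0⟩ := rk_surj rel htr hirr htot (by rw [hcardQ]; omega : k < Fintype.card (Q n))
  have hv0n : v0 ∉ Pk := by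
    rw [hPk]
    intro h
    have := (Finset.mem_filter.mp h).2
    omega
  have hPf : ∀ u ∈ Pk, (jv u : ℕ) ≤ (jv v0 : ℕ) := by
    intro u hu
    have h1 : rk rel u < rk rel v0 := by
      rw [hv0]
      exact (Finset.mem_filter.mp hu).2
    have h2 := lt_of_rk_lt rel htr hirr htot h1
    rw [hrel] at h2
    rcases h2 with h | ⟨h, _⟩ <;> omega
  have hCf : ∀ w, w ∉ Pk → (jv v0 : ℕ) ≤ (jv w : ℕ) := by
    intro w hw
    rcases eq_or_ne w v0 with rfl | hne'
    · rfl
    have h1 : rk rel v0 ≤ rk rel w := by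
      rw [hv0]
      by_contra hcon
      exact hw (Finset.mem_filter.mpr ⟨mem_univ w, by omega⟩)
    have h2 : rel v0 w := by
      rcases Nat.lt_or_ge (rk rel v0) (rk rel w) with h | h
      · exact lt_of_rk_lt rel htr hirr htot h
      · have : rk rel v0 = rk rel w := by omega
        exact absurd (rk_inj rel htr hirr htot this) (Ne.symm hne')
    rw [hrel] at h2
    rcases h2 with h | ⟨h, _⟩ <;> omega
  -- the boundary is contained in bag (jv v0)
  set Pc : Finset (Q n) := univ \ Pk with hPc
  set B : Finset (Q n) := (nbhdT t Pc) \ Pc with hB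
  have hBbag : ∀ u ∈ B, u ∈ D.bag (jv v0) := by
    intro u hu
    obtain ⟨hu1, hu2⟩ := Finset.mem_sdiff.mp hu
    have huPk : u ∈ Pk := by
      rw [hPc] at hu2
      by_contra hcon
      exact hu2 (Finset.mem_sdiff.mpr ⟨mem_univ u, hcon⟩)
    obtain ⟨_, x, hx, hd⟩ := Finset.mem_filter.mp hu1
    have hxPk : x ∉ Pk := by
      rw [hPc] at hx
      exact (Finset.mem_sdiff.mp hx).2
    have hxu : x ≠ u := fun h => hxPk (h ▸ huPk)
    have hadj : (genHamming t 2 n).Adj x u := ⟨hxu, hd⟩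
    obtain ⟨l, hxl, hul⟩ := D.edgeCover x u hadj
    have h1 : (jv v0 : ℕ) ≤ (jv x : ℕ) := hCf x hxPk
    have h2 : (jv x : ℕ) ≤ (l : ℕ) := hjv_min x l hxl
    have h3 : (jv u : ℕ) ≤ (jv v0 : ℕ) := hPf u huPk
    exact D.interval u (jv u) (jv v0) l (by omega) (by omega) (hjv_mem u) hul
  have hv0B : v0 ∉ B := by
    rw [hB, hPc]
    intro h
    exact (Finset.mem_sdiff.mp h).2 (Finset.mem_sdiff.mpr ⟨mem_univ v0, hv0n⟩)
  have hBW : B.card + 1 ≤ W := by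
    have hsub : insert v0 B ⊆ D.bag (jv v0) := by
      intro u hu
      rcases Finset.mem_insert.mp hu with rfl | hu'
      · exact hjv_mem u
      · exact hBbag u hu'
    calc B.card + 1 = (insert v0 B).card := (Finset.card_insert_of_notMem hv0B).symm
      _ ≤ (D.bag (jv v0)).card := Finset.card_le_card hsub
      _ ≤ W := by
          rw [hW]
          exact Finset.le_sup (f := fun i => (D.bag i).card) (mem_univ (jv v0))
  -- Harper bound on the boundary
  have hPcCard : Pc.card = r := by
    rw [hPc, Finset.card_sdiff_of_subset (Finset.subset_univ Pk), Finset.card_univ, hcardQ, hcardPk]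
    omega
  have hBcard : B.card = (nbhdT t Pc).card - r := by
    rw [hB, Finset.card_sdiff_of_subset (subset_nbhdT t Pc), hPcCard]
  have hHarper : phiT n t r ≤ (nbhdT t Pc).card := by
    have := harperT (n := n) t Pc
    rwa [hPcCard] at this
  have hphiTr : r ≤ phiT n t r := le_phiT t (by omega)
  omega


lemma bw_le (w : ℕ)
    (hw : ∃ (m : ℕ) (D : PathDecomp (genHamming t 2 n) m),
      (Finset.univ.sup fun i => (D.bag i).card) - 1 = w) :
    bandwidth (genHamming t 2 n) ≤ w := by
  classical
  obtain ⟨m, D, hDw⟩ := hw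
  set W : ℕ := Finset.univ.sup fun i => (D.bag i).card with hWdef
  have hW1 : 1 ≤ W := by
    obtain ⟨i, hi⟩ := D.cover (fun _ => 0)
    calc 1 ≤ (D.bag i).card := Finset.card_pos.mpr ⟨_, hi⟩
      _ ≤ W := Finset.le_sup (f := fun i => (D.bag i).card) (mem_univ i)
  have hstretch : ∀ u v : Q n, (genHamming t 2 n).Adj u v →
      (((eqv n u : Fin (Fintype.card (Q n))) : ℤ) - ((eqv n v : Fin (Fintype.card (Q n))) : ℤ)).natAbs ≤ W - 1 := by
    have key : ∀ u v : Q n, (genHamming t 2 n).Adj u v → srk u < srk v →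
        srk v + 1 ≤ W + srk u := by
      intro u v hadj hlt
      have hvmem : v ∈ nbhdT t (prefixK n (srk u + 1)) := by
        refine Finset.mem_filter.mpr ⟨mem_univ v, u, ?_, hadj.2⟩
        exact Finset.mem_filter.mpr ⟨mem_univ u, by omega⟩
      rw [nbhdT_prefixK] at hvmem
      have hv' : srk v < phiT n t (srk u + 1) := (Finset.mem_filter.mp hvmem).2
      have hvN : srk v < Fintype.card (Q n) := srk_lt_card v
      have hr := decomp_bound D (srk u + 1) (by omega) (by omega)
      rw [← hWdef] at hr
      omega
    intro u v hadj
    have hcu : ((eqv n u : Fin (Fintype.card (Q n))) : ℤ) = (srk u : ℤ) := by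
      rw [← eqv_val u]
    have hcv : ((eqv n v : Fin (Fintype.card (Q n))) : ℤ) = (srk v : ℤ) := by
      rw [← eqv_val v]
    rw [hcu, hcv]
    rcases Nat.lt_trichotomy (srk u) (srk v) with h | h | h
    · have := key u v hadj h
      omega
    · exact absurd (srk_inj h) hadj.1
    · have := key v u hadj.symm h
      omega
  calc bandwidth (genHamming t 2 n) ≤ W - 1 := Nat.sInf_le ⟨eqv n, hstretch⟩
    _ = w := hDw

lemma pw_le (b : ℕ)
    (hb : ∃ φ : (Q n) ≃ Fin (Fintype.card (Q n)),
      ∀ u v : Q n, (genHamming t 2 n).Adj u v → ((φ u : ℤ) - (φ v : ℤ)).natAbs ≤ b) :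
    pathwidth (genHamming t 2 n) ≤ b := by
  classical
  obtain ⟨φ, hφ⟩ := hb
  have hφ' : ∀ u v : Q n, (genHamming t 2 n).Adj u v →
      ((φ u : ℕ) ≤ (φ v : ℕ) + b ∧ (φ v : ℕ) ≤ (φ u : ℕ) + b) := by
    intro u v hadj
    have hs := hφ u v hadj
    omega
  set bagf : Fin (Fintype.card (Q n)) → Finset (Q n) :=
    fun i => univ.filter (fun x => ((φ x : Fin (Fintype.card (Q n))) : ℕ) ≤ (i : ℕ)
      ∧ (i : ℕ) ≤ ((φ x : Fin (Fintype.card (Q n))) : ℕ) + b) with hbagf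
  have hmem_bag : ∀ (x : Q n) (i : Fin (Fintype.card (Q n))),
      x ∈ bagf i ↔ ((φ x : ℕ) ≤ (i : ℕ) ∧ (i : ℕ) ≤ (φ x : ℕ) + b) := by
    intro x i
    rw [hbagf]
    simp only [Finset.mem_filter, mem_univ, true_and]
  have hcover : ∀ v : Q n, ∃ i, v ∈ bagf i := by
    intro v
    exact ⟨φ v, (hmem_bag v (φ v)).mpr ⟨le_refl _, Nat.le_add_right _ _⟩⟩
  have hedge : ∀ u v : Q n, (genHamming t 2 n).Adj u v → ∃ i, u ∈ bagf i ∧ v ∈ bagf i := by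
    intro u v hadj
    have hs := hφ' u v hadj
    rcases le_total ((φ u : Fin (Fintype.card (Q n))) : ℕ) ((φ v : Fin (Fintype.card (Q n))) : ℕ) with h | h
    · exact ⟨φ v, (hmem_bag u (φ v)).mpr ⟨h, by omega⟩,
        (hmem_bag v (φ v)).mpr ⟨le_refl _, Nat.le_add_right _ _⟩⟩
    · exact ⟨φ u, (hmem_bag u (φ u)).mpr ⟨le_refl _, Nat.le_add_right _ _⟩,
        (hmem_bag v (φ u)).mpr ⟨h, by omega⟩⟩
  have hinterval : ∀ (v : Q n) (i j k : Fin (Fintype.card (Q n))), i ≤ j → j ≤ k →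
      v ∈ bagf i → v ∈ bagf k → v ∈ bagf j := by
    intro v i j k hij hjk hvi hvk
    obtain ⟨h1, _⟩ := (hmem_bag v i).mp hvi
    obtain ⟨_, h4⟩ := (hmem_bag v k).mp hvk
    rw [Fin.le_def] at hij hjk
    exact (hmem_bag v j).mpr ⟨by omega, by omega⟩
  have hsup : (Finset.univ.sup fun i => (bagf i).card) ≤ b + 1 := by
    apply Finset.sup_le
    intro i _
    have hinj : Set.InjOn (fun v => ((φ v : Fin (Fintype.card (Q n))) : ℕ)) (bagf i) := by
      intro x _ y _ hxy
      exact φ.injective (Fin.val_injective hxy)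
    have hmap : ∀ v ∈ bagf i,
        ((φ v : Fin (Fintype.card (Q n))) : ℕ) ∈ Finset.Icc ((i : ℕ) - b) (i : ℕ) := by
      intro v hv
      obtain ⟨h1, h2⟩ := (hmem_bag v i).mp hv
      rw [Finset.mem_Icc]
      omega
    calc (bagf i).card ≤ (Finset.Icc ((i : ℕ) - b) (i : ℕ)).card :=
          Finset.card_le_card_of_injOn _ hmap hinj
      _ = (i : ℕ) + 1 - ((i : ℕ) - b) := Nat.card_Icc _ _
      _ ≤ b + 1 := by omega
  calc pathwidth (genHamming t 2 n)
      ≤ (Finset.univ.sup fun i => (bagf i).card) - 1 :=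
        Nat.sInf_le ⟨Fintype.card (Q n), ⟨bagf, hcover, hedge, hinterval⟩, rfl⟩
    _ ≤ b := by omega

end Main
end HyperPf

/-- For all positive integers `t` and `n`, the pathwidth of the generalized hypercube
`H(t,2,n)` equals its bandwidth. -/
theorem pathwidth_eq_bandwidth_genHypercube (t n : ℕ) (ht : 1 ≤ t) (hn : 1 ≤ n) :
    pathwidth (genHamming t 2 n) = bandwidth (genHamming t 2 n) := by
  classical
  apply le_antisymm
  · -- bandwidth set is nonempty, and its min is achieved
    have hbne : { b : ℕ | ∃ φ : (Fin n → Fin 2) ≃ Fin (Fintype.card (Fin n → Fin 2)),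
        ∀ u v, (genHamming t 2 n).Adj u v → ((φ u : ℤ) - (φ v : ℤ)).natAbs ≤ b }.Nonempty := by
      refine ⟨Fintype.card (Fin n → Fin 2), Fintype.equivFin _, fun u v _ => ?_⟩
      have h1 := (Fintype.equivFin (Fin n → Fin 2) u).isLt
      have h2 := (Fintype.equivFin (Fin n → Fin 2) v).isLt
      omega
    have hmem := Nat.sInf_mem hbne
    exact HyperPf.pw_le _ hmem
  · have hpne : { w : ℕ | ∃ (m : ℕ) (D : PathDecomp (genHamming t 2 n) m),
        (Finset.univ.sup fun i => (D.bag i).card) - 1 = w }.Nonempty := by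
      refine ⟨_, 1, ⟨fun _ => Finset.univ, fun v => ⟨0, Finset.mem_univ v⟩,
        fun u v _ => ⟨0, Finset.mem_univ u, Finset.mem_univ v⟩,
        fun v i j k _ _ _ _ => Finset.mem_univ v⟩, rfl⟩
    have hmem := Nat.sInf_mem hpne
    exact HyperPf.bw_le _ hmem
end

section
/- For all integers n and k with n ≥ 2k+1 and k ≥ 1, the treewidth of the bipartite Kneser graph satisfies tw(BK(n,k)) ≤ C(n,k) − 1. -/

def starGraph (X : Type) : SimpleGraph (Option X) where
  Adj i j := (i = none ∧ j ≠ none) ∨ (j = none ∧ i ≠ none)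
  symm := ⟨fun i j h => h.symm⟩
  loopless := ⟨fun i h => by rcases h with ⟨h1, h2⟩ | ⟨h1, h2⟩ <;> exact h2 h1⟩

lemma not_reachable_of_isolated {V : Type*} (G : SimpleGraph V) (v w : V)
    (h : ∀ u, ¬ G.Adj v u) (hne : v ≠ w) : ¬ G.Reachable v w := by
  rintro ⟨p⟩
  cases p with
  | nil => exact hne rfl
  | cons h' _ => exact h _ h'

lemma starGraph_isTree (X : Type) : (starGraph X).IsTree := by
  constructor
  · refine SimpleGraph.Connected.mk ?_
    intro u v
    have key : ∀ a : Option X, (starGraph X).Reachable a none := by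
      intro a
      rcases a with _ | x
      · exact SimpleGraph.Reachable.refl _
      · exact SimpleGraph.Adj.reachable (Or.inr ⟨rfl, by simp⟩)
    exact (key u).trans (key v).symm
  · rw [SimpleGraph.isAcyclic_iff_forall_adj_isBridge]
    intro v w hadj
    rw [SimpleGraph.isBridge_iff]
    have iso : ∀ (a : X), ∀ u, ¬ ((starGraph X) \ SimpleGraph.fromEdgeSet {s(none, some a)}).Adj (some a) u := by
      rintro a u ⟨hadj', hne⟩
      rcases hadj' with ⟨h1, _⟩ | ⟨h1, _⟩
      · exact Option.some_ne_none a h1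
      · subst h1
        exact hne (by simp [Sym2.eq_swap])
    rcases hadj with ⟨h1, h2⟩ | ⟨h1, h2⟩
    · subst h1
      obtain ⟨a, rfl⟩ := Option.ne_none_iff_exists'.mp h2
      intro hr
      exact not_reachable_of_isolated _ _ _ (iso a) (by simp) hr.symm
    · subst h1
      obtain ⟨a, rfl⟩ := Option.ne_none_iff_exists'.mp h2
      intro hr
      exact not_reachable_of_isolated _ _ _ (by intro u; rw [Sym2.eq_swap]; exact iso a u) (by simp) hr

lemma induce_connected_of_none_mem {X : Type} (S : Set (Option X)) (h : none ∈ S) :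
    ((starGraph X).induce S).Connected := by
  haveI : Nonempty S := ⟨⟨none, h⟩⟩
  refine SimpleGraph.Connected.mk ?_
  · intro a b
    have key : ∀ a : S, ((starGraph X).induce S).Reachable a ⟨none, h⟩ := by
      intro ⟨a, ha⟩
      by_cases h' : a = none
      · subst h'; exact SimpleGraph.Reachable.refl _
      · exact SimpleGraph.Adj.reachable (Or.inr ⟨rfl, h'⟩)
    exact (key a).trans (key b).symm

lemma induce_connected_of_eq_singleton {X : Type} {G : SimpleGraph X} {S : Set X} {x : X}
    (h : S = {x}) : (G.induce S).Connected := by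
  subst h
  haveI : Nonempty ({x} : Set X) := ⟨⟨x, rfl⟩⟩
  refine SimpleGraph.Connected.mk ?_
  · rintro ⟨a, ha⟩ ⟨b, hb⟩
    have : a = b := by
      rw [Set.mem_singleton_iff] at ha hb; rw [ha, hb]
    subst this
    exact SimpleGraph.Reachable.refl _


lemma choose_key (n k : ℕ) (hk : 1 ≤ k) (hn : 2 * k + 1 ≤ n) :
    (n - k).choose k + 1 ≤ n.choose k := by
  obtain ⟨m, rfl⟩ : ∃ m, n = m + 1 := ⟨n - 1, by omega⟩
  obtain ⟨j, rfl⟩ : ∃ j, k = j + 1 := ⟨k - 1, by omega⟩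
  have h1 : (m + 1 - (j + 1)).choose (j + 1) ≤ m.choose (j + 1) :=
    Nat.choose_le_choose _ (by omega)
  have h2 : 0 < m.choose j := Nat.choose_pos (by omega)
  have h3 : (m + 1).choose (j + 1) = m.choose j + m.choose (j + 1) :=
    Nat.choose_succ_succ m j
  omega


/-- For all `k ≥ 1` and `n ≥ 2k+1`, the treewidth of the bipartite Kneser graph
`BK(n,k)` is at most `C(n,k) − 1`. -/
theorem treewidth_bipartiteKneser_le (n k : ℕ) (hk : 1 ≤ k) (hn : 2 * k + 1 ≤ n) :
    treewidth (bipartiteKneser n k) ≤ Nat.choose n k - 1 := by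
  classical
  have hkn : k < n - k := by omega
  let X := {B : Finset (Fin n) // B.card = n - k}
  let bag : Option X → Finset {A : Finset (Fin n) // A.card = k ∨ A.card = n - k} :=
    fun i => i.elim (Finset.univ.filter (fun v => v.1.card = k))
      (fun B => Finset.univ.filter (fun v => v.1 = B.1 ∨ (v.1.card = k ∧ v.1 ⊆ B.1)))
  have mem_none : ∀ v, v ∈ bag none ↔ v.1.card = k := by
    intro v; simp [bag]
  have mem_some : ∀ (B : X) v, v ∈ bag (some B) ↔ v.1 = B.1 ∨ (v.1.card = k ∧ v.1 ⊆ B.1) := by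
    intro B v; simp [bag]
  let D : TreeDecomp (bipartiteKneser n k) (starGraph X) :=
    { bag := bag
      cover := by
        intro v
        rcases v.2 with h | h
        · exact ⟨none, (mem_none v).2 h⟩
        · exact ⟨some ⟨v.1, h⟩, (mem_some _ v).2 (Or.inl rfl)⟩
      edgeCover := by
        have key : ∀ u v, u.1 ⊂ v.1 → ∃ i, u ∈ bag i ∧ v ∈ bag i := by
          intro u v hss
          have hlt : u.1.card < v.1.card := Finset.card_lt_card hss
          have hu : u.1.card = k := by rcases u.2 with h | h <;> rcases v.2 with h' | h' <;> omega
          have hv : v.1.card = n - k := by rcases u.2 with h | h <;> rcases v.2 with h' | h' <;> omega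
          exact ⟨some ⟨v.1, hv⟩, (mem_some _ u).2 (Or.inr ⟨hu, hss.subset⟩),
            (mem_some _ v).2 (Or.inl rfl)⟩
        intro u v hadj
        rcases hadj with h | h
        · exact key u v h
        · obtain ⟨i, h1, h2⟩ := key v u h
          exact ⟨i, h2, h1⟩
      subtree := by
        intro v
        by_cases hv : v.1.card = k
        · exact induce_connected_of_none_mem _ ((mem_none v).2 hv)
        · have hv' : v.1.card = n - k := v.2.resolve_left hv
          apply induce_connected_of_eq_singleton (x := some ⟨v.1, hv'⟩)
          ext i
          simp only [Set.mem_setOf_eq, Set.mem_singleton_iff]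
          constructor
          · intro hi
            rcases i with _ | B
            · exact absurd ((mem_none v).1 hi) hv
            · rcases (mem_some B v).1 hi with h | h
              · exact congrArg some (Subtype.ext h.symm)
              · exact absurd h.1 hv
          · rintro rfl
            exact (mem_some _ v).2 (Or.inl rfl) }
  have bound_none : (bag none).card ≤ n.choose k := by
    have h1 : (bag none).card ≤ (Finset.univ.powersetCard k :
        Finset (Finset (Fin n))).card := by
      apply Finset.card_le_card_of_injOn (fun v => v.1)
      · intro v hv
        rw [Finset.mem_coe, Finset.mem_powersetCard]
        exact ⟨Finset.subset_univ _, (mem_none v).1 (Finset.mem_coe.1 hv)⟩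
      · intro a _ b _ h; exact Subtype.ext h
    rwa [Finset.card_powersetCard, Finset.card_univ, Fintype.card_fin] at h1
  have bound_some : ∀ B : X, (bag (some B)).card ≤ n.choose k := by
    intro B
    have h1 : (bag (some B)).card ≤ (insert B.1 (B.1.powersetCard k)).card := by
      apply Finset.card_le_card_of_injOn (fun v => v.1)
      · intro v hv
        rw [Finset.mem_coe, Finset.mem_insert, Finset.mem_powersetCard]
        rcases (mem_some B v).1 (Finset.mem_coe.1 hv) with h | h
        · exact Or.inl h
        · exact Or.inr ⟨h.2, h.1⟩
      · intro a _ b _ h; exact Subtype.ext h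
    have h2 : (insert B.1 (B.1.powersetCard k)).card ≤ (B.1.powersetCard k).card + 1 :=
      Finset.card_insert_le _ _
    have h3 : (B.1.powersetCard k).card = (n - k).choose k := by
      rw [Finset.card_powersetCard, B.2]
    have h4 := choose_key n k hk hn
    omega
  have hsup : (Finset.univ.sup fun i => (D.bag i).card) ≤ n.choose k := by
    apply Finset.sup_le
    rintro (_ | B) _
    · exact bound_none
    · exact bound_some B
  refine le_trans (Nat.sInf_le ?_) (Nat.sub_le_sub_right hsup 1)
  exact ⟨Option X, inferInstance, starGraph X, starGraph_isTree X, D, rfl⟩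
end
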